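/- arXiv:2502.09995 — 3 statements merged into one kernel-verified Lean document; each statement's English description precedes it below -/
import Mathlib

section
/- Let T ⊆ ℕ* be a finitely branching rooted tree in which every node has at least two successors, and let S ⊆ T be a subtree without leaves that is level-wise uniformly branching. Then, in the ultrametric space [T], the Hausdorff dimension of the set of paths [S] equals liminf_{n→∞} log|S_n| / log|T_n|, where S_n and T_n denote the sets of length-n strings in S and T respectively. -/
open Filter MeasureTheory
open ENNReal NNReal Topology

namespace FractalTree

/-- The `n`-th level of a tree `T ⊆ ℕ*`: the strings in `T` of length `n`. -/
def level (T : Set (List ℕ)) (n : ℕ) : Set (List ℕ) := {σ | σ ∈ T ∧ σ.length = n}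

/-- A tree is a nonempty set of finite sequences closed under initial segments. -/
def IsTree (T : Set (List ℕ)) : Prop :=
  T.Nonempty ∧ ∀ σ ∈ T, ∀ τ : List ℕ, τ <+: σ → τ ∈ T

/-- The immediate successors of a node `σ` in `T`. -/
def succs (T : Set (List ℕ)) (σ : List ℕ) : Set ℕ := {a | σ ++ [a] ∈ T}

/-- Every node of `T` has finitely many immediate successors. -/
def FinBranching (T : Set (List ℕ)) : Prop := ∀ σ ∈ T, (succs T σ).Finite

/-- Every node of `T` has at least two immediate successors. -/
def AtLeastTwo (T : Set (List ℕ)) : Prop :=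
  ∀ σ ∈ T, ∃ a b : ℕ, a ≠ b ∧ a ∈ succs T σ ∧ b ∈ succs T σ

/-- Every node of `S` has at least one immediate successor (no leaves). -/
def NoLeaves (S : Set (List ℕ)) : Prop := ∀ σ ∈ S, ∃ a : ℕ, a ∈ succs S σ

/-- `S` is level-wise uniformly branching: the number of immediate successors of a node
only depends on its level. -/
def UnifBranching (S : Set (List ℕ)) : Prop :=
  ∀ n : ℕ, ∀ σ ∈ level S n, ∀ τ ∈ level S n, (succs S σ).ncard = (succs S τ).ncard

/-- The initial segment of length `n` of an infinite sequence `f`. -/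
def seg (f : ℕ → ℕ) (n : ℕ) : List ℕ := (List.range n).map f

/-- The set `[T]` of infinite paths through `T`. -/
def paths (T : Set (List ℕ)) : Set (ℕ → ℕ) := {f | ∀ n : ℕ, seg f n ∈ T}

open Classical in
/-- The ultrametric on `[T]`: `d(f,g) = 1/|T_n|` where `n` is the least index with
`f n ≠ g n`, and `d(f,f) = 0`. -/
noncomputable def treeDist (T : Set (List ℕ)) (f g : ℕ → ℕ) : ℝ :=
  if h : ∃ n, f n ≠ g n then 1 / ((level T (Nat.find h)).ncard : ℝ) else 0


/-! ### seg lemmas -/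

@[simp] lemma seg_length (f : ℕ → ℕ) (n : ℕ) : (seg f n).length = n := by simp [seg]

lemma seg_zero (f : ℕ → ℕ) : seg f 0 = [] := rfl

lemma seg_succ (f : ℕ → ℕ) (n : ℕ) : seg f (n+1) = seg f n ++ [f n] := by
  simp [seg, List.range_succ]

lemma seg_getElem (f : ℕ → ℕ) {n i : ℕ} (hi : i < n) :
    (seg f n)[i]'(by simpa using hi) = f i := by
  simp [seg]

lemma seg_getD (f : ℕ → ℕ) {n i : ℕ} (hi : i < n) : (seg f n).getD i 0 = f i := by
  rw [List.getD_eq_getElem _ _ (by simpa using hi), seg_getElem f hi]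

lemma seg_take (f : ℕ → ℕ) {m n : ℕ} (h : m ≤ n) : (seg f n).take m = seg f m := by
  simp [seg, ← List.map_take, List.take_range, Nat.min_eq_left h]

lemma seg_prefix (f : ℕ → ℕ) {m n : ℕ} (h : m ≤ n) : seg f m <+: seg f n := by
  rw [← seg_take f h]; exact List.take_prefix _ _

lemma seg_eq_iff {f g : ℕ → ℕ} {n : ℕ} : seg f n = seg g n ↔ ∀ i < n, f i = g i := by
  constructor
  · intro h i hi
    have : (seg f n).getD i 0 = (seg g n).getD i 0 := by rw [h]
    rwa [seg_getD f hi, seg_getD g hi] at this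
  · intro h
    apply List.ext_getElem (by simp)
    intro i h1 h2
    rw [seg_getElem f (by simpa using h1), seg_getElem g (by simpa using h1)]
    exact h i (by simpa using h1)

lemma seg_eq_of_length {f : ℕ → ℕ} {σ : List ℕ} {n : ℕ} (hσ : σ.length = n) :
    seg f n = σ ↔ ∀ i < n, f i = σ.getD i 0 := by
  constructor
  · intro h i hi
    rw [← h, seg_getD f hi]
  · intro h
    apply List.ext_getElem (by simp [hσ])
    intro i h1 h2
    rw [seg_getElem f (by simpa using h1), ← List.getD_eq_getElem σ 0 h2]
    exact h i (by simpa using h1)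

/-! ### basic tree lemmas -/

lemma nil_mem {T : Set (List ℕ)} (hT : IsTree T) : [] ∈ T := by
  obtain ⟨⟨σ, hσ⟩, hcl⟩ := hT
  exact hcl σ hσ [] List.nil_prefix

lemma take_mem {T : Set (List ℕ)} (hT : IsTree T) {σ : List ℕ} (hσ : σ ∈ T) (n : ℕ) :
    σ.take n ∈ T := hT.2 σ hσ _ (List.take_prefix n σ)

lemma level_zero {T : Set (List ℕ)} (hT : IsTree T) : level T 0 = {([] : List ℕ)} := by
  ext σ
  simp only [level, Set.mem_setOf_eq, List.length_eq_zero_iff, Set.mem_singleton_iff]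
  exact ⟨fun h => h.2, fun h => ⟨h ▸ nil_mem hT, h⟩⟩

lemma level_succ {T : Set (List ℕ)} (hT : IsTree T) (n : ℕ) :
    level T (n+1) = ⋃ σ ∈ level T n, (fun a => σ ++ [a]) '' succs T σ := by
  ext ρ
  simp only [Set.mem_iUnion, Set.mem_image, exists_prop]
  constructor
  · rintro ⟨hρT, hlen⟩
    have hne : ρ ≠ [] := by intro h; simp [h] at hlen
    refine ⟨ρ.dropLast, ⟨hT.2 ρ hρT _ (List.dropLast_prefix ρ), by simp [hlen]⟩,
      ρ.getLast hne, ?_, List.dropLast_append_getLast hne⟩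
    show ρ.dropLast ++ [ρ.getLast hne] ∈ T
    rw [List.dropLast_append_getLast hne]; exact hρT
  · rintro ⟨σ, hσ, a, ha, rfl⟩
    exact ⟨ha, by simp [hσ.2]⟩

lemma level_finite {T : Set (List ℕ)} (hT : IsTree T) (hfin : FinBranching T) :
    ∀ n, (level T n).Finite := by
  intro n
  induction n with
  | zero => rw [level_zero hT]; exact Set.finite_singleton _
  | succ n ih =>
      rw [level_succ hT n]
      exact ih.biUnion fun σ hσ => (hfin σ hσ.1).image _

lemma level_nonempty {S : Set (List ℕ)} (hS : IsTree S) (h : NoLeaves S) :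
    ∀ n, (level S n).Nonempty := by
  intro n
  induction n with
  | zero => exact ⟨[], nil_mem hS, rfl⟩
  | succ n ih =>
      obtain ⟨σ, hσ⟩ := ih
      obtain ⟨a, ha⟩ := h σ hσ.1
      exact ⟨σ ++ [a], ha, by simp [hσ.2]⟩

lemma noLeaves_of_atLeastTwo {T : Set (List ℕ)} (h : AtLeastTwo T) : NoLeaves T := by
  intro σ hσ
  obtain ⟨a, b, _, ha, _⟩ := h σ hσ
  exact ⟨a, ha⟩


/-! ### exists_path -/

lemma exists_path {S : Set (List ℕ)} (hS : IsTree S) (hSnl : NoLeaves S) {σ : List ℕ}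
    (hσ : σ ∈ S) : ∃ f ∈ paths S, seg f σ.length = σ := by
  classical
  let step : {l : List ℕ // l ∈ S} → {l : List ℕ // l ∈ S} := fun p =>
    ⟨p.1 ++ [(hSnl p.1 p.2).choose], (hSnl p.1 p.2).choose_spec⟩
  let L : ℕ → {l : List ℕ // l ∈ S} := fun k => step^[k] ⟨σ, hσ⟩
  have hstep : ∀ k, L (k+1) = step (L k) := fun k => Function.iterate_succ_apply' step k _
  have hlen : ∀ k, (L k).1.length = σ.length + k := by
    intro k
    induction k with
    | zero => rfl
    | succ k ih => rw [hstep]; show ((L k).1 ++ _).length = _; simp [ih]; omega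
  have hpre : ∀ k, (L k).1 <+: (L (k+1)).1 := fun k => by
    rw [hstep]; exact ⟨_, rfl⟩
  have hpre' : ∀ k k', k ≤ k' → (L k).1 <+: (L k').1 := by
    intro k k' h
    induction k' with
    | zero =>
        have : k = 0 := by omega
        rw [this]
    | succ m ih =>
        rcases Nat.lt_or_ge k (m+1) with h' | h'
        · exact (ih (by omega)).trans (hpre m)
        · have : k = m + 1 := by omega
          rw [this]
  set f : ℕ → ℕ := fun n => (L (n+1)).1.getD n 0 with hfdef
  have hseg : ∀ m, seg f m = (L m).1.take m := by
    intro m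
    induction m with
    | zero => rfl
    | succ m ih =>
        rw [seg_succ, ih]
        have hm : m < (L (m+1)).1.length := by rw [hlen]; omega
        rw [List.take_succ]
        congr 1
        · obtain ⟨t, ht⟩ := hpre m
          rw [← ht, List.take_append_of_le_length (by rw [hlen]; omega)]
        · show [(L (m+1)).1.getD m 0] = _
          simp [List.getD_eq_getElem _ _ hm, List.getElem?_eq_getElem hm]
  have hf : f ∈ paths S := fun m => by rw [hseg m]; exact take_mem hS (L m).2 m
  refine ⟨f, hf, ?_⟩
  rw [hseg]
  obtain ⟨t, ht⟩ := hpre' 0 σ.length (Nat.zero_le _)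
  have h0 : (L 0).1 = σ := rfl
  rw [h0] at ht
  rw [← ht, List.take_left]

/-! ### counting lemmas -/

lemma succs_finite_of_level {S : Set (List ℕ)} (hfin : ∀ n, (level S n).Finite)
    {m : ℕ} {τ : List ℕ} (hτ : τ ∈ level S m) : (succs S τ).Finite := by
  apply Set.Finite.of_finite_image (f := fun a => τ ++ [a])
  · apply (hfin (m+1)).subset
    rintro ρ ⟨a, ha, rfl⟩
    exact ⟨ha, by simp [hτ.2]⟩
  · intro a _ b _ h
    simpa using h

lemma take_mem_level {S : Set (List ℕ)} (hS : IsTree S) {m k : ℕ} {ρ : List ℕ}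
    (hρ : ρ ∈ level S k) (hmk : m ≤ k) : ρ.take m ∈ level S m :=
  ⟨take_mem hS hρ.1 m, by simp [hρ.2]; omega⟩

lemma ncard_children_sum {S : Set (List ℕ)} (hS : IsTree S) (hfin : ∀ n, (level S n).Finite)
    {m : ℕ} (A : Finset (List ℕ)) (hA : ↑A ⊆ level S m) :
    {ρ ∈ level S (m+1) | ρ.take m ∈ A}.ncard = ∑ τ ∈ A, (succs S τ).ncard := by
  classical
  have hsf : ∀ τ ∈ A, (succs S τ).Finite := fun τ hτ => succs_finite_of_level hfin (hA hτ)
  let g : List ℕ → Finset (List ℕ) := fun τ =>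
    if h : τ ∈ A then ((hsf τ h).toFinset.image (fun a => τ ++ [a])) else ∅
  have hgset : {ρ ∈ level S (m+1) | ρ.take m ∈ A} = ↑(A.biUnion g) := by
    ext ρ
    simp only [Set.mem_setOf_eq, Finset.coe_biUnion, Set.mem_iUnion, Finset.mem_coe,
      Finset.mem_biUnion]
    constructor
    · rintro ⟨hρ, htake⟩
      rw [level_succ hS] at hρ
      simp only [Set.mem_iUnion, Set.mem_image, exists_prop] at hρ
      obtain ⟨τ, hτ, a, ha, rfl⟩ := hρ
      have htake' : (τ ++ [a]).take m = τ := List.take_left' hτ.2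
      rw [htake'] at htake
      refine ⟨τ, htake, ?_⟩
      simp only [g, dif_pos htake, Finset.mem_image, Set.Finite.mem_toFinset]
      exact ⟨a, ha, rfl⟩
    · rintro ⟨τ, hτ, hρ⟩
      simp only [g, dif_pos hτ, Finset.mem_image, Set.Finite.mem_toFinset] at hρ
      obtain ⟨a, ha, rfl⟩ := hρ
      have hlev := hA hτ
      exact ⟨⟨ha, by simp [hlev.2]⟩, by rw [List.take_left' hlev.2]; exact hτ⟩
  rw [hgset, Set.ncard_coe_finset]
  rw [Finset.card_biUnion]
  · apply Finset.sum_congr rfl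
    intro τ hτ
    simp only [g, dif_pos hτ]
    rw [Finset.card_image_of_injective _ (fun a b h => by simpa using h)]
    exact (Set.ncard_eq_toFinset_card _ (hsf τ hτ)).symm
  · intro τ hτ τ' hτ' hne
    simp only [Finset.disjoint_left, g, dif_pos hτ, dif_pos hτ']

    rintro ρ hρ hρ'
    simp only [dif_pos (Finset.mem_coe.1 hτ), dif_pos (Finset.mem_coe.1 hτ'), Finset.mem_image, Set.Finite.mem_toFinset] at hρ hρ'
    obtain ⟨a, _, rfl⟩ := hρ
    obtain ⟨b, _, h⟩ := hρ'
    have hlen : τ'.length = τ.length := by rw [(hA hτ).2, (hA hτ').2]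
    obtain ⟨h1, -⟩ := List.append_inj h.symm hlen.symm
    exact hne (h1 ▸ rfl)


lemma level_ncard_pos {S : Set (List ℕ)} (hS : IsTree S) (hSnl : NoLeaves S)
    (hfin : ∀ n, (level S n).Finite) (n : ℕ) : 0 < (level S n).ncard :=
  (Set.ncard_pos (hfin n)).2 (level_nonempty hS hSnl n)

lemma level_card_succ {S : Set (List ℕ)} (hS : IsTree S) (hfin : ∀ n, (level S n).Finite)
    {m b : ℕ} (hb : ∀ τ ∈ level S m, (succs S τ).ncard = b) :
    (level S (m+1)).ncard = b * (level S m).ncard := by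
  classical
  have hA : ↑(hfin m).toFinset ⊆ level S m := by simp
  have h := ncard_children_sum hS hfin (hfin m).toFinset hA
  have hset : {ρ ∈ level S (m+1) | ρ.take m ∈ (hfin m).toFinset} = level S (m+1) := by
    ext ρ
    simp only [Set.mem_setOf_eq, Set.Finite.mem_toFinset]
    exact ⟨fun h => h.1, fun h => ⟨h, take_mem_level hS h m.le_succ⟩⟩
  rw [hset] at h
  rw [h, Finset.sum_congr rfl (fun τ hτ => hb τ (by simpa using hτ)),
    Finset.sum_const, smul_eq_mul, Set.ncard_eq_toFinset_card _ (hfin m), mul_comm]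

lemma ext_card_succ {S : Set (List ℕ)} (hS : IsTree S) (hfin : ∀ n, (level S n).Finite)
    {L m b : ℕ} (hLm : L ≤ m) (hb : ∀ τ ∈ level S m, (succs S τ).ncard = b) (σ : List ℕ) :
    {τ ∈ level S (m+1) | τ.take L = σ}.ncard = b * {τ ∈ level S m | τ.take L = σ}.ncard := by
  classical
  have hEfin : {τ ∈ level S m | τ.take L = σ}.Finite := (hfin m).subset (Set.sep_subset _ _)
  have hA : ↑hEfin.toFinset ⊆ level S m := by
    intro τ hτ
    simp only [Finset.mem_coe, Set.Finite.mem_toFinset] at hτ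
    exact hτ.1
  have h := ncard_children_sum hS hfin hEfin.toFinset hA
  have htt : ∀ ρ : List ℕ, (ρ.take m).take L = ρ.take L := by
    intro ρ; rw [List.take_take, Nat.min_eq_left hLm]
  have hset : {ρ ∈ level S (m+1) | ρ.take m ∈ hEfin.toFinset}
      = {τ ∈ level S (m+1) | τ.take L = σ} := by
    ext ρ
    simp only [Set.mem_setOf_eq, Set.Finite.mem_toFinset]
    constructor
    · rintro ⟨h1, _, h3⟩
      exact ⟨h1, by rw [← htt ρ, h3]⟩
    · rintro ⟨h1, h2⟩
      exact ⟨h1, take_mem_level hS h1 m.le_succ, by rw [htt ρ]; exact h2⟩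
  rw [hset] at h
  rw [h, Finset.sum_congr rfl (fun τ hτ => hb τ (hA (by simpa using hτ))),
    Finset.sum_const, smul_eq_mul, Set.ncard_eq_toFinset_card _ hEfin, mul_comm]

lemma ext_mul {S : Set (List ℕ)} (hS : IsTree S) (hSnl : NoLeaves S)
    (hfin : ∀ n, (level S n).Finite) (hSub : UnifBranching S)
    {L : ℕ} {σ : List ℕ} (hσ : σ ∈ level S L) (k : ℕ) :
    {τ ∈ level S (L+k) | τ.take L = σ}.ncard * (level S L).ncard = (level S (L+k)).ncard := by
  induction k with
  | zero =>
      have hone : {τ ∈ level S (L+0) | τ.take L = σ} = {σ} := by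
        ext τ
        simp only [Nat.add_zero, Set.mem_setOf_eq, Set.mem_singleton_iff]
        constructor
        · rintro ⟨h1, h2⟩
          rw [← h2, ← h1.2, List.take_length]
        · rintro rfl
          exact ⟨hσ, by rw [← hσ.2, List.take_length]⟩
      rw [hone, Set.ncard_singleton, one_mul, Nat.add_zero]
  | succ k ih =>
      obtain ⟨τ₀, hτ₀⟩ := level_nonempty hS hSnl (L+k)
      have hb : ∀ τ ∈ level S (L+k), (succs S τ).ncard = (succs S τ₀).ncard :=
        fun τ hτ => hSub _ τ hτ τ₀ hτ₀
      have h1 := ext_card_succ hS hfin (Nat.le_add_right L k) hb σ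
      have h2 := level_card_succ hS hfin hb
      show {τ ∈ level S ((L+k)+1) | τ.take L = σ}.ncard * _ = (level S ((L+k)+1)).ncard
      rw [h1, h2, mul_assoc, ih]

lemma cover_counting {S : Set (List ℕ)} (hS : IsTree S) (hSnl : NoLeaves S)
    (hfin : ∀ n, (level S n).Finite) (hSub : UnifBranching S)
    (I : Finset ℕ) (σ : ℕ → List ℕ) (L : ℕ → ℕ)
    (hmem : ∀ n ∈ I, σ n ∈ level S (L n))
    (hcov : ∀ f ∈ paths S, ∃ n ∈ I, seg f (L n) = σ n) :
    (1:ℝ≥0∞) ≤ ∑ n ∈ I, ((level S (L n)).ncard : ℝ≥0∞)⁻¹ := by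
  classical
  set M := I.sup L with hM
  have hLM : ∀ n ∈ I, L n ≤ M := fun n hn => Finset.le_sup hn
  set E : ℕ → Set (List ℕ) := fun n => {τ ∈ level S M | τ.take (L n) = σ n} with hE
  have hEfin : ∀ n, (E n).Finite := fun n => (hfin M).subset (Set.sep_subset _ _)
  -- nat cardinality bound
  have hcard : (level S M).ncard ≤ ∑ n ∈ I, (E n).ncard := by
    have hsub : (hfin M).toFinset ⊆ I.biUnion (fun n => (hEfin n).toFinset) := by
      intro τ hτ
      rw [Set.Finite.mem_toFinset] at hτ
      obtain ⟨f, hf, hfseg⟩ := exists_path hS hSnl hτ.1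
      rw [hτ.2] at hfseg
      obtain ⟨n, hn, hns⟩ := hcov f hf
      refine Finset.mem_biUnion.2 ⟨n, hn, ?_⟩
      rw [Set.Finite.mem_toFinset]
      refine ⟨hτ, ?_⟩
      rw [← hfseg, seg_take f (hLM n hn), hns]
    calc (level S M).ncard = (hfin M).toFinset.card := Set.ncard_eq_toFinset_card _ _
      _ ≤ (I.biUnion (fun n => (hEfin n).toFinset)).card := Finset.card_le_card hsub
      _ ≤ ∑ n ∈ I, (hEfin n).toFinset.card := Finset.card_biUnion_le
      _ = ∑ n ∈ I, (E n).ncard := by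
          exact Finset.sum_congr rfl fun n _ => (Set.ncard_eq_toFinset_card _ _).symm
  have hMpos : 0 < (level S M).ncard := level_ncard_pos hS hSnl hfin M
  have hM0 : ((level S M).ncard : ℝ≥0∞) ≠ 0 := by exact_mod_cast hMpos.ne'
  have hMtop : ((level S M).ncard : ℝ≥0∞) ≠ ⊤ := ENNReal.natCast_ne_top _
  have hkey : ∀ n ∈ I, ((level S (L n)).ncard : ℝ≥0∞)⁻¹
      = ((E n).ncard : ℝ≥0∞) * ((level S M).ncard : ℝ≥0∞)⁻¹ := by
    intro n hn
    have he := ext_mul hS hSnl hfin hSub (hmem n hn) (M - L n)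
    rw [show L n + (M - L n) = M from by have := hLM n hn; omega] at he
    have hcast : ((E n).ncard : ℝ≥0∞) * ((level S (L n)).ncard : ℝ≥0∞)
        = ((level S M).ncard : ℝ≥0∞) := by exact_mod_cast congrArg Nat.cast he
    have he0 : ((E n).ncard : ℝ≥0∞) ≠ 0 := by
      intro h0
      rw [h0, zero_mul] at hcast
      exact hM0 hcast.symm
    have hetop : ((E n).ncard : ℝ≥0∞) ≠ ⊤ := ENNReal.natCast_ne_top _
    have hsL0 : ((level S (L n)).ncard : ℝ≥0∞) ≠ 0 := by
      exact_mod_cast (level_ncard_pos hS hSnl hfin (L n)).ne'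
    rw [← hcast, ENNReal.mul_inv (Or.inr (ENNReal.natCast_ne_top _)) (Or.inl hetop),
      ← mul_assoc, ENNReal.mul_inv_cancel he0 hetop, one_mul]
  calc (1:ℝ≥0∞) = ((level S M).ncard : ℝ≥0∞) * ((level S M).ncard : ℝ≥0∞)⁻¹ :=
        (ENNReal.mul_inv_cancel hM0 hMtop).symm
    _ ≤ (∑ n ∈ I, ((E n).ncard : ℝ≥0∞)) * ((level S M).ncard : ℝ≥0∞)⁻¹ := by
        gcongr
        exact_mod_cast hcard
    _ = ∑ n ∈ I, ((E n).ncard : ℝ≥0∞) * ((level S M).ncard : ℝ≥0∞)⁻¹ := Finset.sum_mul _ _ _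
    _ = ∑ n ∈ I, ((level S (L n)).ncard : ℝ≥0∞)⁻¹ :=
        Finset.sum_congr rfl fun n hn => (hkey n hn).symm


/-! ### growth of T levels -/

lemma level_card_two_mul {T : Set (List ℕ)} (hT : IsTree T) (hTfin : FinBranching T)
    (hT2 : AtLeastTwo T) (n : ℕ) :
    2 * (level T n).ncard ≤ (level T (n+1)).ncard := by
  classical
  have hfin := level_finite hT hTfin
  have hA : ↑(hfin n).toFinset ⊆ level T n := by simp
  have h := ncard_children_sum hT hfin (hfin n).toFinset hA
  have hset : {ρ ∈ level T (n+1) | ρ.take n ∈ (hfin n).toFinset} = level T (n+1) := by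
    ext ρ
    simp only [Set.mem_setOf_eq, Set.Finite.mem_toFinset]
    exact ⟨fun h => h.1, fun h => ⟨h, take_mem_level hT h n.le_succ⟩⟩
  rw [hset] at h
  rw [h]
  calc 2 * (level T n).ncard = ∑ _τ ∈ (hfin n).toFinset, 2 := by
        rw [Finset.sum_const, smul_eq_mul, Set.ncard_eq_toFinset_card _ (hfin n), mul_comm]
    _ ≤ ∑ τ ∈ (hfin n).toFinset, (succs T τ).ncard := by
        apply Finset.sum_le_sum
        intro τ hτ
        rw [Set.Finite.mem_toFinset] at hτ
        obtain ⟨a, b, hab, ha, hb⟩ := hT2 τ hτ.1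
        have hfin' : (succs T τ).Finite := hTfin τ hτ.1
        exact Set.one_lt_ncard_iff hfin' |>.2 ⟨a, b, ha, hb, hab⟩

lemma two_pow_le_level_card {T : Set (List ℕ)} (hT : IsTree T) (hTfin : FinBranching T)
    (hT2 : AtLeastTwo T) (n : ℕ) : 2 ^ n ≤ (level T n).ncard := by
  induction n with
  | zero => rw [level_zero hT]; simp
  | succ n ih =>
      calc 2 ^ (n+1) = 2 * 2 ^ n := by ring
        _ ≤ 2 * (level T n).ncard := by omega
        _ ≤ (level T (n+1)).ncard := level_card_two_mul hT hTfin hT2 n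

lemma level_card_strictMono {T : Set (List ℕ)} (hT : IsTree T) (hTfin : FinBranching T)
    (hT2 : AtLeastTwo T) : StrictMono (fun n => (level T n).ncard) := by
  apply strictMono_nat_of_lt_succ
  intro n
  have h1 : 0 < (level T n).ncard :=
    level_ncard_pos hT (noLeaves_of_atLeastTwo hT2) (level_finite hT hTfin) n
  have h2 := level_card_two_mul hT hTfin hT2 n
  omega

/-! ### metric lemmas -/

lemma treeDist_eq {T : Set (List ℕ)} {f g : ℕ → ℕ} {k : ℕ}
    (hk : f k ≠ g k) (hmin : ∀ i < k, f i = g i) :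
    treeDist T f g = 1 / ((level T k).ncard : ℝ) := by
  classical
  have h : ∃ n, f n ≠ g n := ⟨k, hk⟩
  have hfind : Nat.find h = k := (Nat.find_eq_iff h).2 ⟨hk, fun i hi => not_not.2 (hmin i hi)⟩
  rw [treeDist, dif_pos h, hfind]

section Metric
variable {X : Type*} [MetricSpace X] {T : Set (List ℕ)} {φ : (ℕ → ℕ) → X}

lemma edist_phi_eq (hφ : ∀ f ∈ paths T, ∀ g ∈ paths T, dist (φ f) (φ g) = treeDist T f g)
    {f g : ℕ → ℕ} (hf : f ∈ paths T) (hg : g ∈ paths T) {k : ℕ}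
    (hpos : 0 < (level T k).ncard)
    (hk : f k ≠ g k) (hmin : ∀ i < k, f i = g i) :
    edist (φ f) (φ g) = ((level T k).ncard : ℝ≥0∞)⁻¹ := by
  rw [edist_dist, hφ f hf g hg, treeDist_eq hk hmin, one_div,
    ENNReal.ofReal_inv_of_pos (by exact_mod_cast hpos), ENNReal.ofReal_natCast]

lemma edist_phi_le (hφ : ∀ f ∈ paths T, ∀ g ∈ paths T, dist (φ f) (φ g) = treeDist T f g)
    (hT : IsTree T) (hTfin : FinBranching T) (hT2 : AtLeastTwo T)
    {f g : ℕ → ℕ} (hf : f ∈ paths T) (hg : g ∈ paths T) {n : ℕ}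
    (hseg : ∀ i < n, f i = g i) :
    edist (φ f) (φ g) ≤ ((level T n).ncard : ℝ≥0∞)⁻¹ := by
  by_cases hfg : f = g
  · subst hfg
    simp
  · have h : ∃ i, f i ≠ g i := by
      by_contra hc
      push_neg at hc
      exact hfg (funext hc)
    classical
    set k := Nat.find h with hkdef
    have hk : f k ≠ g k := Nat.find_spec h
    have hmin : ∀ i < k, f i = g i := fun i hi => not_not.1 (Nat.find_min h hi)
    have hnk : n ≤ k := by
      by_contra hc
      push_neg at hc
      exact hk (hseg k hc)
    have hpos : 0 < (level T k).ncard :=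
      level_ncard_pos hT (noLeaves_of_atLeastTwo hT2) (level_finite hT hTfin) k
    rw [edist_phi_eq hφ hf hg hpos hk hmin]
    apply ENNReal.inv_le_inv.2
    exact_mod_cast (level_card_strictMono hT hTfin hT2).monotone hnk

end Metric

/-! ### topology of path space -/

lemma cylinder_isOpen {σ : List ℕ} {n : ℕ} (hσ : σ.length = n) :
    IsOpen {f : ℕ → ℕ | seg f n = σ} := by
  have heq : {f : ℕ → ℕ | seg f n = σ} = ⋂ i ∈ Finset.range n, {f : ℕ → ℕ | f i = σ.getD i 0} := by
    ext f
    simp only [Set.mem_setOf_eq, Set.mem_iInter, Finset.mem_range]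
    exact seg_eq_of_length hσ
  rw [heq]
  refine isOpen_biInter_finset fun i _ => ?_
  have : {f : ℕ → ℕ | f i = σ.getD i 0} = (fun f : ℕ → ℕ => f i) ⁻¹' {σ.getD i 0} := rfl
  rw [this]
  exact (isOpen_discrete _).preimage (continuous_apply i)

lemma paths_isClosed (S : Set (List ℕ)) : IsClosed (paths S) := by
  rw [← isOpen_compl_iff, isOpen_iff_mem_nhds]
  intro f hf
  simp only [Set.mem_compl_iff, paths, Set.mem_setOf_eq, not_forall] at hf
  obtain ⟨n, hn⟩ := hf
  refine Filter.mem_of_superset ((cylinder_isOpen (seg_length f n)).mem_nhds (by simp)) ?_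
  intro g hg hgS
  simp only [Set.mem_setOf_eq] at hg
  exact hn (hg ▸ hgS n)

lemma paths_isCompact {S : Set (List ℕ)} (hfin : ∀ n, (level S n).Finite) :
    IsCompact (paths S) := by
  have hsub : paths S ⊆ Set.pi Set.univ
      (fun n => (fun l : List ℕ => l.getD n 0) '' (level S (n+1))) := by
    intro f hf n _
    exact ⟨seg f (n+1), ⟨hf (n+1), seg_length f (n+1)⟩, seg_getD f (Nat.lt_succ_self n)⟩
  exact IsCompact.of_isClosed_subset
    (isCompact_univ_pi fun n => ((hfin (n+1)).image _).isCompact)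
    (paths_isClosed S) hsub

lemma paths_mono {S T : Set (List ℕ)} (h : S ⊆ T) : paths S ⊆ paths T :=
  fun _ hf n => h (hf n)


/-! ### ratio function basics -/

lemma log_natCast_nonneg (k : ℕ) : 0 ≤ Real.log k := by
  rcases Nat.eq_zero_or_pos k with rfl | hk
  · simp
  · exact Real.log_nonneg (by exact_mod_cast hk)

lemma ratio_nonneg (T S : Set (List ℕ)) (n : ℕ) :
    0 ≤ Real.log ((level S n).ncard) / Real.log ((level T n).ncard) :=
  div_nonneg (log_natCast_nonneg _) (log_natCast_nonneg _)

lemma two_le_D {T : Set (List ℕ)} (hT : IsTree T) (hTfin : FinBranching T)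
    (hT2 : AtLeastTwo T) {n : ℕ} (hn : 1 ≤ n) : 2 ≤ (level T n).ncard := by
  calc 2 = 2 ^ 1 := by norm_num
    _ ≤ 2 ^ n := Nat.pow_le_pow_right (by norm_num) hn
    _ ≤ _ := two_pow_le_level_card hT hTfin hT2 n

lemma logD_pos {T : Set (List ℕ)} (hT : IsTree T) (hTfin : FinBranching T)
    (hT2 : AtLeastTwo T) {n : ℕ} (hn : 1 ≤ n) : 0 < Real.log ((level T n).ncard) :=
  Real.log_pos (by exact_mod_cast two_le_D hT hTfin hT2 hn)

lemma ratio_le_one {T S : Set (List ℕ)} (hT : IsTree T) (hTfin : FinBranching T)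
    (hT2 : AtLeastTwo T) (hST : S ⊆ T) (n : ℕ) :
    Real.log ((level S n).ncard) / Real.log ((level T n).ncard) ≤ 1 := by
  rcases Nat.eq_zero_or_pos n with rfl | hn
  · have : level S 0 ⊆ level T 0 := fun σ hσ => ⟨hST hσ.1, hσ.2⟩
    rw [level_zero hT] at this
    have h1 : (level S 0).ncard ≤ 1 := by
      calc (level S 0).ncard ≤ ({[]} : Set (List ℕ)).ncard :=
            Set.ncard_le_ncard this (Set.finite_singleton _)
        _ = 1 := Set.ncard_singleton _
    interval_cases h : (level S 0).ncard <;> simp [h]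
  · rw [div_le_one (logD_pos hT hTfin hT2 hn)]
    have hle : (level S n).ncard ≤ (level T n).ncard :=
      Set.ncard_le_ncard (fun σ hσ => ⟨hST hσ.1, hσ.2⟩) (level_finite hT hTfin n)
    rcases Nat.eq_zero_or_pos (level S n).ncard with h0 | hpos
    · rw [h0]; simpa using (logD_pos hT hTfin hT2 hn).le
    · exact Real.log_le_log (by exact_mod_cast hpos) (by exact_mod_cast hle)

lemma tendsto_inv_levelcard {T : Set (List ℕ)} (hT : IsTree T) (hTfin : FinBranching T)
    (hT2 : AtLeastTwo T) :
    Tendsto (fun n => ((level T n).ncard : ℝ≥0∞)⁻¹) atTop (𝓝 0) := by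
  rw [ENNReal.tendsto_nhds_zero]
  intro ε hε
  obtain ⟨k, hk⟩ := ENNReal.exists_inv_two_pow_lt hε.ne'
  filter_upwards [Filter.eventually_ge_atTop k] with n hn
  have h2n : ((2:ℝ≥0∞) ^ n)⁻¹ ≤ (2 ^ k)⁻¹ := by
    apply ENNReal.inv_le_inv.2
    exact pow_le_pow_right' (by norm_num) hn
  calc ((level T n).ncard : ℝ≥0∞)⁻¹ ≤ ((2:ℝ≥0∞) ^ n)⁻¹ := by
        apply ENNReal.inv_le_inv.2
        exact_mod_cast two_pow_le_level_card hT hTfin hT2 n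
    _ ≤ (2 ^ k)⁻¹ := h2n
    _ = 2⁻¹ ^ k := by rw [ENNReal.inv_pow]
    _ ≤ ε := hk.le

/-! ### upper bound -/

lemma dimH_upper {T S : Set (List ℕ)}
    (hT : IsTree T) (hTfin : FinBranching T) (hT2 : AtLeastTwo T)
    (hST : S ⊆ T) (hS : IsTree S) (hSnl : NoLeaves S)
    {X : Type*} [MetricSpace X] [MeasurableSpace X] [BorelSpace X] {φ : (ℕ → ℕ) → X}
    (hφ : ∀ f ∈ paths T, ∀ g ∈ paths T, dist (φ f) (φ g) = treeDist T f g) :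
    dimH (φ '' paths S) ≤
      ENNReal.ofReal (Filter.liminf
        (fun n : ℕ => Real.log ((level S n).ncard) / Real.log ((level T n).ncard))
        Filter.atTop) := by
  classical
  set u : ℕ → ℝ := fun n => Real.log ((level S n).ncard) / Real.log ((level T n).ncard) with hu
  have hTlf := level_finite hT hTfin
  have hSlf : ∀ n, (level S n).Finite :=
    fun n => (hTlf n).subset (fun σ hσ => ⟨hST hσ.1, hσ.2⟩)
  have hDpos : ∀ n, 0 < (level T n).ncard :=
    level_ncard_pos hT (noLeaves_of_atLeastTwo hT2) hTlf
  have hspos : ∀ n, 0 < (level S n).ncard := level_ncard_pos hS hSnl hSlf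
  apply dimH_le
  intro d' hd'
  by_contra hcon
  push_neg at hcon
  have hαd : Filter.liminf u Filter.atTop < (d' : ℝ) := by
    by_contra hc
    push_neg at hc
    refine absurd ?_ hcon.not_ge
    calc (d' : ℝ≥0∞) = ENNReal.ofReal (d' : ℝ) := ENNReal.ofReal_coe_nnreal.symm
      _ ≤ _ := ENNReal.ofReal_le_ofReal hc
  -- show the Hausdorff measure is in fact zero (we show it is ≤ 0)
  have hkey : μH[(d' : ℝ)] (φ '' paths S) = 0 := by
    -- covering at each level n
    have hr : Tendsto (fun n => ((level T n).ncard : ℝ≥0∞)⁻¹) atTop (𝓝 0) :=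
      tendsto_inv_levelcard hT hTfin hT2
    have hdiam : ∀ n : ℕ, ∀ σ : ((hSlf n).toFinset : Finset (List ℕ)),
        EMetric.diam (φ '' {f ∈ paths S | seg f n = (σ : List ℕ)})
          ≤ ((level T n).ncard : ℝ≥0∞)⁻¹ := by
      intro n σ
      apply EMetric.diam_le
      rintro x ⟨f, ⟨hf, hfσ⟩, rfl⟩ y ⟨g, ⟨hg, hgσ⟩, rfl⟩
      exact edist_phi_le hφ hT hTfin hT2 (paths_mono hST hf) (paths_mono hST hg)
        (seg_eq_iff.1 (hfσ.trans hgσ.symm))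
    have hcovering : ∀ n : ℕ, φ '' paths S ⊆
        ⋃ σ : ((hSlf n).toFinset : Finset (List ℕ)),
          φ '' {f ∈ paths S | seg f n = (σ : List ℕ)} := by
      intro n
      rintro x ⟨f, hf, rfl⟩
      refine Set.mem_iUnion.2 ⟨⟨seg f n, ?_⟩, ⟨f, ⟨hf, rfl⟩, rfl⟩⟩
      rw [Set.Finite.mem_toFinset]
      exact ⟨hf n, seg_length f n⟩
    have hcov := Measure.hausdorffMeasure_le_liminf_sum (d' : ℝ) (φ '' paths S)
      (fun n => ((level T n).ncard : ℝ≥0∞)⁻¹) hr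
      (fun n (σ : ((hSlf n).toFinset : Finset (List ℕ))) =>
        φ '' {f ∈ paths S | seg f n = (σ : List ℕ)})
      (Filter.Eventually.of_forall hdiam) (Filter.Eventually.of_forall hcovering)
    refine le_antisymm (le_trans hcov ?_) zero_le
      -- the liminf of the sums is 0
    have hterm : ∀ n, (∑ σ : ((hSlf n).toFinset : Finset (List ℕ)),
        EMetric.diam (φ '' {f ∈ paths S | seg f n = (σ : List ℕ)}) ^ (d' : ℝ))
        ≤ ((level S n).ncard : ℝ≥0∞) * (((level T n).ncard : ℝ≥0∞)⁻¹ ^ (d' : ℝ)) := by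
      intro n
      calc _ ≤ ∑ _σ : ((hSlf n).toFinset : Finset (List ℕ)),
            (((level T n).ncard : ℝ≥0∞)⁻¹ ^ (d' : ℝ)) := by
            apply Finset.sum_le_sum
            intro σ _
            apply ENNReal.rpow_le_rpow ?_ (d'.coe_nonneg)
            apply EMetric.diam_le
            rintro x ⟨f, ⟨hf, hfσ⟩, rfl⟩ y ⟨g, ⟨hg, hgσ⟩, rfl⟩
            exact edist_phi_le hφ hT hTfin hT2 (paths_mono hST hf) (paths_mono hST hg)
              (seg_eq_iff.1 (hfσ.trans hgσ.symm))
        _ = _ := by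
            rw [Finset.sum_const, Finset.card_univ, Fintype.card_coe, nsmul_eq_mul]
            congr 2
            exact ((Set.ncard_eq_toFinset_card _ (hSlf n))).symm
    -- now show liminf of the RHS is ≤ ε for every ε > 0
    refine ENNReal.le_of_forall_pos_le_add fun ε hε _ => ?_
    rw [zero_add]
    -- real-number estimates
    set α := Filter.liminf u Filter.atTop with hα
    set δ := ((d' : ℝ) - α) / 2 with hδ
    have hδpos : 0 < δ := by rw [hδ]; linarith
    set q : ℝ := (2 : ℝ) ^ (-δ) with hq
    have hq1 : q < 1 := Real.rpow_lt_one_of_one_lt_of_neg (by norm_num) (by linarith)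
    have hq0 : 0 ≤ q := (Real.rpow_pos_of_pos (by norm_num) _).le
    have htend : Tendsto (fun n : ℕ => q ^ n) atTop (𝓝 0) :=
      tendsto_pow_atTop_nhds_zero_of_lt_one hq0 hq1
    have hev : ∀ᶠ n : ℕ in atTop, ENNReal.ofReal (q ^ n) ≤ (ε : ℝ≥0∞) := by
      have := htend.eventually (gt_mem_nhds (show (0:ℝ) < ε from hε))
      filter_upwards [this] with n hn
      calc ENNReal.ofReal (q ^ n) ≤ ENNReal.ofReal ε := ENNReal.ofReal_le_ofReal hn.le
        _ = (ε : ℝ≥0∞) := ENNReal.ofReal_coe_nnreal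
    have hfreq : ∃ᶠ n : ℕ in atTop, u n < α + δ := by
      apply Filter.frequently_lt_of_liminf_lt
      · exact Filter.IsBoundedUnder.isCoboundedUnder_ge
          (Filter.isBoundedUnder_of ⟨1, fun n => ratio_le_one hT hTfin hT2 hST n⟩)
      · rw [← hα]; linarith
    have hfreq2 : ∃ᶠ n : ℕ in atTop,
        (u n < α + δ ∧ 1 ≤ n) ∧ ENNReal.ofReal (q ^ n) ≤ (ε : ℝ≥0∞) :=
      (hfreq.and_eventually (Filter.eventually_ge_atTop 1)).and_eventually hev
    apply Filter.liminf_le_of_frequently_le'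
    apply hfreq2.mono
    rintro n ⟨⟨hun, hn1⟩, hqn⟩
    refine le_trans (hterm n) (le_trans ?_ hqn)
    -- (s n) * (D n)⁻¹ ^ d' ≤ ofReal (q ^ n)
    have hD1 : (0:ℝ) < ((level T n).ncard : ℝ) := by exact_mod_cast hDpos n
    have hs1 : (0:ℝ) < ((level S n).ncard : ℝ) := by exact_mod_cast hspos n
    have hlogD : 0 < Real.log ((level T n).ncard) := logD_pos hT hTfin hT2 hn1
    -- s n ≤ D n ^ (α + δ)
    have hsle : ((level S n).ncard : ℝ) ≤ ((level T n).ncard : ℝ) ^ (α + δ) := by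
      rw [Real.le_rpow_iff_log_le hs1 hD1]
      have := (div_lt_iff₀ hlogD).1 hun
      linarith
    have hDn : ((level T n).ncard : ℝ≥0∞) = ENNReal.ofReal ((level T n).ncard : ℝ) := by
      rw [ENNReal.ofReal_natCast]
    have hsn : ((level S n).ncard : ℝ≥0∞) = ENNReal.ofReal ((level S n).ncard : ℝ) := by
      rw [ENNReal.ofReal_natCast]
    rw [hDn, hsn, ENNReal.inv_rpow, ENNReal.ofReal_rpow_of_pos hD1,
      ← ENNReal.ofReal_inv_of_pos (Real.rpow_pos_of_pos hD1 _),
      ← ENNReal.ofReal_mul hs1.le]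
    apply ENNReal.ofReal_le_ofReal
    calc ((level S n).ncard : ℝ) * (((level T n).ncard : ℝ) ^ (d' : ℝ))⁻¹
        ≤ ((level T n).ncard : ℝ) ^ (α + δ) * (((level T n).ncard : ℝ) ^ (d' : ℝ))⁻¹ := by
          apply mul_le_mul_of_nonneg_right hsle
          positivity
      _ = ((level T n).ncard : ℝ) ^ ((α + δ) - (d' : ℝ)) := by
          rw [Real.rpow_sub hD1, div_eq_mul_inv]
      _ ≤ ((2:ℝ) ^ n) ^ ((α + δ) - (d' : ℝ)) := by
          apply Real.rpow_le_rpow_of_nonpos (by positivity) ?_ (by rw [hδ]; linarith)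
          exact_mod_cast two_pow_le_level_card hT hTfin hT2 n
      _ = q ^ n := by
          rw [hq, ← Real.rpow_natCast ((2:ℝ) ^ (-δ)) n, ← Real.rpow_natCast (2:ℝ) n,
            ← Real.rpow_mul (by norm_num), ← Real.rpow_mul (by norm_num)]
          congr 1
          rw [hδ]; ring
  rw [hkey] at hd'
  exact ENNReal.zero_ne_top hd'


/-! ### lower bound -/

lemma dimH_lower {T S : Set (List ℕ)}
    (hT : IsTree T) (hTfin : FinBranching T) (hT2 : AtLeastTwo T)
    (hST : S ⊆ T) (hS : IsTree S) (hSnl : NoLeaves S) (hSub : UnifBranching S)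
    {X : Type*} [MetricSpace X] [MeasurableSpace X] [BorelSpace X] {φ : (ℕ → ℕ) → X}
    (hφ : ∀ f ∈ paths T, ∀ g ∈ paths T, dist (φ f) (φ g) = treeDist T f g) :
    ENNReal.ofReal (Filter.liminf
        (fun n : ℕ => Real.log ((level S n).ncard) / Real.log ((level T n).ncard))
        Filter.atTop) ≤ dimH (φ '' paths S) := by
  classical
  set u : ℕ → ℝ := fun n => Real.log ((level S n).ncard) / Real.log ((level T n).ncard) with hu
  have hTlf := level_finite hT hTfin
  have hSlf : ∀ n, (level S n).Finite :=
    fun n => (hTlf n).subset (fun σ hσ => ⟨hST hσ.1, hσ.2⟩)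
  have hDpos : ∀ n, 0 < (level T n).ncard :=
    level_ncard_pos hT (noLeaves_of_atLeastTwo hT2) hTlf
  have hspos : ∀ n, 0 < (level S n).ncard := level_ncard_pos hS hSnl hSlf
  apply ENNReal.le_of_forall_nnreal_lt
  intro r hr
  rcases eq_or_ne r 0 with rfl | hr0
  · simp
  have hrpos : (0:ℝ) < (r:ℝ) := by positivity
  -- from ↑r < ofReal (liminf u) we get (r : ℝ) < liminf u
  have hrα : (r:ℝ) < Filter.liminf u Filter.atTop := by
    by_contra hc
    push_neg at hc
    have : ENNReal.ofReal (Filter.liminf u Filter.atTop) ≤ (r : ℝ≥0∞) := by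
      calc ENNReal.ofReal (Filter.liminf u Filter.atTop) ≤ ENNReal.ofReal (r:ℝ) :=
            ENNReal.ofReal_le_ofReal hc
        _ = (r : ℝ≥0∞) := ENNReal.ofReal_coe_nnreal
    exact absurd hr this.not_gt
  -- eventually r < u n
  have hev : ∀ᶠ n in atTop, (r:ℝ) < u n :=
    Filter.eventually_lt_of_lt_liminf hrα
      (Filter.isBoundedUnder_of ⟨0, fun n => ratio_nonneg T S n⟩)
  obtain ⟨N₀, hN₀⟩ := Filter.eventually_atTop.1 (hev.and (Filter.eventually_ge_atTop 1))
  set N := N₀ + 1 with hNdef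
  have hN : ∀ n, N ≤ n → (r:ℝ) < u n ∧ 1 ≤ n := fun n hn => hN₀ n (by omega)
  -- the key pointwise inequality
  have hkeyineq : ∀ m, N ≤ m →
      ((level S m).ncard : ℝ≥0∞)⁻¹ ≤ (((level T m).ncard : ℝ≥0∞)⁻¹) ^ (r:ℝ) := by
    intro m hm
    obtain ⟨hum, hm1⟩ := hN m hm
    have hD1 : (0:ℝ) < ((level T m).ncard : ℝ) := by exact_mod_cast hDpos m
    have hs1 : (0:ℝ) < ((level S m).ncard : ℝ) := by exact_mod_cast hspos m
    have hlogD : 0 < Real.log ((level T m).ncard) := logD_pos hT hTfin hT2 hm1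
    have hrle : ((level T m).ncard : ℝ) ^ (r:ℝ) ≤ ((level S m).ncard : ℝ) := by
      rw [← Real.log_le_log_iff (Real.rpow_pos_of_pos hD1 _) hs1, Real.log_rpow hD1]
      have := (lt_div_iff₀ hlogD).1 hum
      linarith
    rw [ENNReal.inv_rpow]
    apply ENNReal.inv_le_inv.2
    calc ((level T m).ncard : ℝ≥0∞) ^ (r:ℝ)
        = ENNReal.ofReal (((level T m).ncard : ℝ) ^ (r:ℝ)) := by
          rw [← ENNReal.ofReal_rpow_of_pos hD1, ENNReal.ofReal_natCast]
      _ ≤ ENNReal.ofReal ((level S m).ncard : ℝ) := ENNReal.ofReal_le_ofReal hrle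
      _ = ((level S m).ncard : ℝ≥0∞) := ENNReal.ofReal_natCast _
  -- (s m)⁻¹ tends to 0
  have htendS : Tendsto (fun m => ((level S m).ncard : ℝ≥0∞)⁻¹) atTop (𝓝 0) := by
    rw [ENNReal.tendsto_nhds_zero]
    intro ε hε
    rcases eq_or_ne ε ⊤ with rfl | hεtop
    · exact Filter.Eventually.of_forall fun m => le_top
    have hεr : (0:ℝ≥0∞) < ε ^ (r:ℝ)⁻¹ := by
      apply ENNReal.rpow_pos hε hεtop
    obtain ⟨k, hk⟩ := ENNReal.exists_inv_two_pow_lt hεr.ne'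
    filter_upwards [Filter.eventually_ge_atTop (max N k)] with m hm
    have hmN : N ≤ m := le_trans (le_max_left _ _) hm
    have hmk : k ≤ m := le_trans (le_max_right _ _) hm
    calc ((level S m).ncard : ℝ≥0∞)⁻¹ ≤ (((level T m).ncard : ℝ≥0∞)⁻¹) ^ (r:ℝ) :=
          hkeyineq m hmN
      _ ≤ (((2:ℝ≥0∞) ^ k)⁻¹) ^ (r:ℝ) := by
          apply ENNReal.rpow_le_rpow ?_ hrpos.le
          apply ENNReal.inv_le_inv.2
          calc ((2:ℝ≥0∞) ^ k) ≤ (2:ℝ≥0∞) ^ m := pow_le_pow_right' (by norm_num) hmk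
            _ ≤ ((level T m).ncard : ℝ≥0∞) := by
                exact_mod_cast two_pow_le_level_card hT hTfin hT2 m
      _ ≤ (ε ^ (r:ℝ)⁻¹) ^ (r:ℝ) := by
          apply ENNReal.rpow_le_rpow ?_ hrpos.le
          rw [← ENNReal.inv_pow] at hk
          exact hk.le
      _ = ε := by
          rw [← ENNReal.rpow_mul, inv_mul_cancel₀ (by exact_mod_cast hrpos.ne'), ENNReal.rpow_one]
  -- show 1 ≤ μH[r] (φ '' paths S)
  have hmu : (1:ℝ≥0∞) ≤ μH[(r:ℝ)] (φ '' paths S) := by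
    rw [Measure.hausdorffMeasure_apply]
    have hradpos : (0:ℝ≥0∞) < ((level T N).ncard : ℝ≥0∞)⁻¹ :=
      ENNReal.inv_pos.2 (ENNReal.natCast_ne_top _)
    refine le_trans ?_ (le_iSup₂ (((level T N).ncard : ℝ≥0∞)⁻¹) hradpos)
    refine le_iInf fun t => le_iInf fun hts => le_iInf fun htd => ?_
    rcases eq_or_ne (∑' n, ⨆ _ : (t n).Nonempty, Metric.ediam (t n) ^ (r:ℝ)) ⊤ with htop | htop
    · rw [htop]; exact le_top
    apply ENNReal.le_of_forall_pos_le_add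
    intro ε hε _
    -- choose representative paths
    have hFn : ∀ n, ∃ f, ((t n ∩ φ '' paths S).Nonempty → f ∈ paths S ∧ φ f ∈ t n) := by
      intro n
      by_cases h : (t n ∩ φ '' paths S).Nonempty
      · obtain ⟨x, hx1, f, hf, rfl⟩ := h
        exact ⟨f, fun _ => ⟨hf, hx1⟩⟩
      · exact ⟨fun _ => 0, fun h' => absurd h' h⟩
    choose F hF using hFn
    -- choose levels
    have hLv : ∀ n, (t n ∩ φ '' paths S).Nonempty → ∃ L, N ≤ L ∧
        (∀ f ∈ paths S, φ f ∈ t n → seg f L = seg (F n) L) ∧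
        ((level S L).ncard : ℝ≥0∞)⁻¹ ≤
          EMetric.diam (t n) ^ (r:ℝ) + (ε:ℝ≥0∞) * 2⁻¹ ^ (n+1) := by
      intro n hn
      obtain ⟨hFS, hFt⟩ := hF n hn
      rcases eq_or_ne (EMetric.diam (t n)) 0 with hd0 | hdpos
      · -- zero diameter : t n meets the image in exactly one point
        have hwev : ∀ᶠ m in atTop, ((level S m).ncard : ℝ≥0∞)⁻¹ ≤ (ε:ℝ≥0∞) * 2⁻¹ ^ (n+1) := by
          rw [ENNReal.tendsto_nhds_zero] at htendS
          apply htendS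
          have h2 : (0:ℝ≥0∞) < 2⁻¹ ^ (n+1) := by
            apply ENNReal.pow_pos
            simp
          exact ENNReal.mul_pos (by exact_mod_cast hε.ne') h2.ne' 
        obtain ⟨m, hm1, hm2⟩ :=
          (hwev.and (Filter.eventually_ge_atTop N)).exists
        refine ⟨m, hm2, ?_, le_trans hm1 le_add_self⟩
        intro f hfS hft
        have hdist : edist (φ f) (φ (F n)) = 0 := by
          apply le_antisymm ?_ zero_le
          rw [← hd0]
          exact EMetric.edist_le_diam_of_mem hft hFt
        have hfeq : f = F n := by
          by_contra hne
          have hex : ∃ i, f i ≠ F n i := by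
            by_contra hc
            push_neg at hc
            exact hne (funext hc)
          set k := Nat.find hex with hkdef
          have hk : f k ≠ F n k := Nat.find_spec hex
          have hmin : ∀ i < k, f i = F n i := fun i hi => not_not.1 (Nat.find_min hex hi)
          have := edist_phi_eq hφ (paths_mono hST hfS) (paths_mono hST hFS)
            (hDpos k) hk hmin
          rw [hdist] at this
          have h0 : ((level T k).ncard : ℝ≥0∞)⁻¹ ≠ 0 :=
            (ENNReal.inv_pos.2 (ENNReal.natCast_ne_top _)).ne'
          exact h0 this.symm
        rw [hfeq]
      · -- positive diameter : take the least level L with (D L)⁻¹ ≤ diam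
        have hex : ∃ L, ((level T L).ncard : ℝ≥0∞)⁻¹ ≤ EMetric.diam (t n) := by
          have htD := ENNReal.tendsto_nhds_zero.1 (tendsto_inv_levelcard hT hTfin hT2)
            (EMetric.diam (t n)) (hdpos.bot_lt)
          exact htD.exists
        set L := Nat.find hex with hLdef
        have hL : ((level T L).ncard : ℝ≥0∞)⁻¹ ≤ EMetric.diam (t n) := Nat.find_spec hex
        have hLN : N ≤ L := by
          have h1 : ((level T L).ncard : ℝ≥0∞)⁻¹ ≤ ((level T N).ncard : ℝ≥0∞)⁻¹ :=
            le_trans hL (htd n)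
          have h2 : (level T N).ncard ≤ (level T L).ncard := by
            have := ENNReal.inv_le_inv.1 h1
            exact_mod_cast this
          by_contra hc
          push_neg at hc
          exact absurd h2 (not_le.2 (level_card_strictMono hT hTfin hT2 hc))
        refine ⟨L, hLN, ?_, ?_⟩
        · -- agreement up to level L
          intro f hfS hft
          rcases eq_or_ne f (F n) with rfl | hne
          · rfl
          have hex2 : ∃ i, f i ≠ F n i := by
            by_contra hc
            push_neg at hc
            exact hne (funext hc)
          have hk : f (Nat.find hex2) ≠ F n (Nat.find hex2) := Nat.find_spec hex2
          have hmin : ∀ i < Nat.find hex2, f i = F n i :=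
            fun i hi => not_not.1 (Nat.find_min hex2 hi)
          have hed := edist_phi_eq hφ (paths_mono hST hfS) (paths_mono hST hFS)
            (hDpos (Nat.find hex2)) hk hmin
          have hdle : ((level T (Nat.find hex2)).ncard : ℝ≥0∞)⁻¹ ≤ EMetric.diam (t n) := by
            rw [← hed]
            exact EMetric.edist_le_diam_of_mem hft hFt
          have hLk : L ≤ Nat.find hex2 := Nat.find_min' hex hdle
          exact seg_eq_iff.2 fun i hi => hmin i (lt_of_lt_of_le hi hLk)
        · -- weight bound
          refine le_trans (le_trans (hkeyineq L hLN) ?_) le_self_add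
          exact ENNReal.rpow_le_rpow hL hrpos.le
    -- make the level choice a total function
    have hLv' : ∀ n, ∃ L, ((t n ∩ φ '' paths S).Nonempty → (N ≤ L ∧
        (∀ f ∈ paths S, φ f ∈ t n → seg f L = seg (F n) L) ∧
        ((level S L).ncard : ℝ≥0∞)⁻¹ ≤
          EMetric.diam (t n) ^ (r:ℝ) + (ε:ℝ≥0∞) * 2⁻¹ ^ (n+1))) := by
      intro n
      by_cases h : (t n ∩ φ '' paths S).Nonempty
      · obtain ⟨L, h1, h2, h3⟩ := hLv n h
        exact ⟨L, fun _ => ⟨h1, h2, h3⟩⟩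
      · exact ⟨0, fun h' => absurd h' h⟩
    choose Lv hLv2 using hLv'
    -- the open cover of the path space by cylinders
    set V : ℕ → Set (ℕ → ℕ) := fun n =>
      if (t n ∩ φ '' paths S).Nonempty then
        {g : ℕ → ℕ | seg g (Lv n) = seg (F n) (Lv n)} else ∅ with hV
    have hVopen : ∀ n, IsOpen (V n) := by
      intro n
      simp only [hV]
      split_ifs with h
      · exact cylinder_isOpen (seg_length (F n) (Lv n))
      · exact isOpen_empty
    have hVcov : paths S ⊆ ⋃ n, V n := by
      intro f hf
      have hfx : φ f ∈ ⋃ n, t n := hts ⟨f, hf, rfl⟩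
      obtain ⟨n, hft⟩ := Set.mem_iUnion.1 hfx
      have hne : (t n ∩ φ '' paths S).Nonempty := ⟨φ f, hft, f, hf, rfl⟩
      refine Set.mem_iUnion.2 ⟨n, ?_⟩
      simp only [hV]
      simp only [if_pos hne, Set.mem_setOf_eq]
      exact (hLv2 n hne).2.1 f hf hft
    obtain ⟨I, hI⟩ := (paths_isCompact hSlf).elim_finite_subcover V hVopen hVcov
    set I' : Finset ℕ := I.filter (fun n => (t n ∩ φ '' paths S).Nonempty) with hI'
    have hcount : (1:ℝ≥0∞) ≤ ∑ n ∈ I', ((level S (Lv n)).ncard : ℝ≥0∞)⁻¹ := by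
      apply cover_counting hS hSnl hSlf hSub I' (fun n => seg (F n) (Lv n)) Lv
      · intro n hn
        rw [hI', Finset.mem_filter] at hn
        exact ⟨(hF n hn.2).1 (Lv n), seg_length _ _⟩
      · intro f hf
        obtain ⟨n, hnI, hfV⟩ := Set.mem_iUnion₂.1 (hI hf)
        have hne : (t n ∩ φ '' paths S).Nonempty := by
          by_contra h
          simp only [hV] at hfV
          simp only [if_neg h] at hfV
          exact hfV
        refine ⟨n, by rw [hI', Finset.mem_filter]; exact ⟨hnI, hne⟩, ?_⟩
        simp only [hV] at hfV
        simp only [if_pos hne, Set.mem_setOf_eq] at hfV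
        exact hfV
    -- assemble the estimate
    have hgeom : (∑' n : ℕ, (ε:ℝ≥0∞) * 2⁻¹ ^ (n+1)) = (ε:ℝ≥0∞) := by
      rw [ENNReal.tsum_mul_left]
      have : (∑' n : ℕ, (2⁻¹:ℝ≥0∞) ^ (n+1)) = (∑' n : ℕ, (2⁻¹:ℝ≥0∞) ^ n) * 2⁻¹ := by
        rw [← ENNReal.tsum_mul_right]
        congr 1
        funext n
        rw [pow_succ]
      rw [this, ENNReal.tsum_geometric, ENNReal.one_sub_inv_two, inv_inv]
      have h21 : (2:ℝ≥0∞) * 2⁻¹ = 1 := ENNReal.mul_inv_cancel (by norm_num) (by norm_num)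
      rw [h21, mul_one]
    calc (1:ℝ≥0∞) ≤ ∑ n ∈ I', ((level S (Lv n)).ncard : ℝ≥0∞)⁻¹ := hcount
      _ ≤ ∑ n ∈ I', ((⨆ _ : (t n).Nonempty, EMetric.diam (t n) ^ (r:ℝ))
            + (ε:ℝ≥0∞) * 2⁻¹ ^ (n+1)) := by
          apply Finset.sum_le_sum
          intro n hn
          rw [hI', Finset.mem_filter] at hn
          have hne := hn.2
          have hw := (hLv2 n hne).2.2
          have hguard : (⨆ _ : (t n).Nonempty, EMetric.diam (t n) ^ (r:ℝ))
              = EMetric.diam (t n) ^ (r:ℝ) := by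
            rw [iSup_pos ⟨hne.choose, hne.choose_spec.1⟩]
          rw [hguard]
          exact hw
      _ = (∑ n ∈ I', ⨆ _ : (t n).Nonempty, EMetric.diam (t n) ^ (r:ℝ))
            + ∑ n ∈ I', (ε:ℝ≥0∞) * 2⁻¹ ^ (n+1) := Finset.sum_add_distrib
      _ ≤ (∑' n : ℕ, ⨆ _ : (t n).Nonempty, EMetric.diam (t n) ^ (r:ℝ))
            + ∑' n : ℕ, (ε:ℝ≥0∞) * 2⁻¹ ^ (n+1) :=
          add_le_add (ENNReal.sum_le_tsum I') (ENNReal.sum_le_tsum I')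
      _ = (∑' n : ℕ, ⨆ _ : (t n).Nonempty, EMetric.diam (t n) ^ (r:ℝ)) + (ε:ℝ≥0∞) := by
          rw [hgeom]
  have hne : μH[(r:ℝ)] (φ '' paths S) ≠ 0 := by
    intro h0
    rw [h0] at hmu
    exact (not_le.2 zero_lt_one) hmu
  exact le_dimH_of_hausdorffMeasure_ne_zero hne


/-- For a finitely branching tree `T` in which every node has at least two
successors and a level-wise uniformly branching subtree `S ⊆ T` without leaves, the Hausdorff
dimension of `[S]` in the ultrametric space `[T]` equals `liminf_n log|S_n| / log|T_n|`. -/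
theorem hausdorff_dim_of_unifBranching
    (T S : Set (List ℕ))
    (hT : IsTree T) (hTfin : FinBranching T) (hT2 : AtLeastTwo T)
    (hST : S ⊆ T) (hS : IsTree S) (hSnl : NoLeaves S) (hSub : UnifBranching S)
    {X : Type*} [MetricSpace X] (φ : (ℕ → ℕ) → X)
    (hφ : ∀ f ∈ paths T, ∀ g ∈ paths T, dist (φ f) (φ g) = treeDist T f g) :
    dimH (φ '' paths S) =
      ENNReal.ofReal (Filter.liminf
        (fun n : ℕ => Real.log ((level S n).ncard) / Real.log ((level T n).ncard))
        Filter.atTop) := by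
  borelize X
  exact le_antisymm (dimH_upper hT hTfin hT2 hST hS hSnl hφ)
    (dimH_lower hT hTfin hT2 hST hS hSnl hSub hφ)

end FractalTree
end

section
/- Let E be the Cantor group, the set of all sequences x : ℕ → ℤ/2ℤ under pointwise addition, equipped with the ultrametric d(x,y) = 2^{-n} for distinct x,y, where n is the least index with x(n) ≠ y(n). For R ⊆ ℕ, let U_R = { x ∈ E : x(n) = 0 for all n ∉ R }, a closed subgroup of E. Then the Hausdorff dimension of U_R equals the lower asymptotic density of R, i.e. dim_H(U_R) = liminf_{n→∞} |R ∩ {0,…,n−1}| / n. -/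
open Filter MeasureTheory TopologicalSpace ENNReal NNReal

namespace CantorGroup

open Classical in
/-- The ultrametric on the Cantor group `E = (ℕ → ℤ/2ℤ)`: `d(x,x) = 0` and, for `x ≠ y`,
`d(x,y) = 2^{-n}` where `n` is the least index with `x n ≠ y n`. -/
noncomputable def cantorDist (x y : ℕ → ZMod 2) : ℝ :=
  if h : ∃ n, x n ≠ y n then (2 : ℝ)⁻¹ ^ Nat.find h else 0

/-- The closed subgroup `U_R = { x ∈ E : x n = 0 for all n ∉ R }`. -/
def UR (R : Set ℕ) : Set (ℕ → ZMod 2) := {x | ∀ n : ℕ, n ∉ R → x n = 0}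

/-! ### Basic properties of `cantorDist` -/

lemma cantorDist_nonneg (x y : ℕ → ZMod 2) : 0 ≤ cantorDist x y := by
  unfold cantorDist; split <;> positivity

lemma cantorDist_le_of_agree {x y : ℕ → ZMod 2} {n : ℕ} (h : ∀ i < n, x i = y i) :
    cantorDist x y ≤ (2 : ℝ)⁻¹ ^ n := by
  unfold cantorDist
  split
  · rename_i hex
    apply pow_le_pow_of_le_one (by norm_num) (by norm_num)
    by_contra hc
    exact Nat.find_spec hex (h _ (not_le.1 hc))
  · positivity

lemma agree_of_cantorDist_lt {x y : ℕ → ZMod 2} {n : ℕ}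
    (h : cantorDist x y < (2 : ℝ)⁻¹ ^ n) : ∀ i ≤ n, x i = y i := by
  intro i hi
  unfold cantorDist at h
  split at h
  · rename_i hex
    by_contra hne
    have h1 : Nat.find hex ≤ n := (Nat.find_le hne).trans hi
    exact absurd h (not_lt.2 (pow_le_pow_of_le_one (by norm_num) (by norm_num) h1))
  · rename_i hex
    push_neg at hex
    exact hex i

lemma cantorDist_ultra (x y z : ℕ → ZMod 2) :
    cantorDist x z ≤ max (cantorDist x y) (cantorDist y z) := by
  by_contra hc
  push_neg at hc
  obtain ⟨h1, h2⟩ := max_lt_iff.1 hc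
  have h0 : 0 < cantorDist x z := lt_of_le_of_lt (cantorDist_nonneg x y) h1
  have hex : ∃ n, x n ≠ z n := by
    by_contra hall
    push_neg at hall
    have : cantorDist x z = 0 := by
      unfold cantorDist; rw [dif_neg]; push_neg; exact hall
    simp [this] at h0
  have heq : cantorDist x z = (2:ℝ)⁻¹ ^ Nat.find hex := by
    unfold cantorDist; rw [dif_pos hex]
  rw [heq] at h1 h2
  have hxy := agree_of_cantorDist_lt h1 _ le_rfl
  have hyz := agree_of_cantorDist_lt h2 _ le_rfl
  exact Nat.find_spec hex (hxy.trans hyz)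

/-! ### Instances on `ZMod 2` and the Haar measure on `G = ℕ → ZMod 2` -/

instance : TopologicalSpace (ZMod 2) := ⊥
instance : DiscreteTopology (ZMod 2) := ⟨rfl⟩
instance : MeasurableSpace (ZMod 2) := ⊤
instance : BorelSpace (ZMod 2) := ⟨(borel_eq_top_of_discrete).symm⟩

abbrev G := ℕ → ZMod 2

noncomputable def haarG : Measure G := Measure.addHaarMeasure ⊤

instance : IsProbabilityMeasure haarG := by
  constructor
  have := Measure.addHaarMeasure_self (K₀ := (⊤ : PositiveCompacts G))
  rwa [TopologicalSpace.PositiveCompacts.coe_top] at this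

instance : haarG.IsAddLeftInvariant :=
  Measure.isAddLeftInvariant_addHaarMeasure ⊤

def cyl (m : ℕ) (a : G) : Set G := {x | ∀ i < m, x i = a i}

lemma measurableSet_cyl (m : ℕ) (a : G) : MeasurableSet (cyl m a) := by
  have : cyl m a = ⋂ i ∈ Set.Iio m, (fun x : G => x i) ⁻¹' {a i} := by
    ext x; simp [cyl]
  rw [this]
  exact MeasurableSet.biInter (Set.to_countable _)
    (fun i _ => (measurable_pi_apply i) (MeasurableSet.singleton _))

lemma zmod2_add_eq_zero_iff : ∀ u v : ZMod 2, u + v = 0 ↔ u = v := by decide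

lemma haarG_cyl_eq (m : ℕ) (a : G) : haarG (cyl m a) = haarG (cyl m 0) := by
  have hpre : cyl m a = (fun x : G => a + x) ⁻¹' cyl m 0 := by
    ext x
    simp only [cyl, Set.mem_preimage, Set.mem_setOf_eq, Pi.add_apply, Pi.zero_apply]
    constructor
    · intro h i hi; rw [zmod2_add_eq_zero_iff]; exact (h i hi).symm
    · intro h i hi; have := h i hi; rw [zmod2_add_eq_zero_iff] at this; exact this.symm
  rw [hpre, measure_preimage_add]

lemma haarG_cyl (m : ℕ) (a : G) : haarG (cyl m a) = (2 : ℝ≥0∞)⁻¹ ^ m := by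
  classical
  have key : ∑ b : Fin m → ZMod 2,
      haarG (cyl m (fun i => if h : i < m then b ⟨i, h⟩ else 0)) = 1 := by
    rw [← measure_biUnion_finset]
    · have : (⋃ b ∈ (Finset.univ : Finset (Fin m → ZMod 2)),
          cyl m (fun i => if h : i < m then b ⟨i, h⟩ else 0)) = Set.univ := by
        ext x
        simp only [Set.mem_iUnion, Set.mem_univ, iff_true, Finset.mem_univ, Set.iUnion_true]
        exact ⟨fun j => x j, fun i hi => by simp [hi, cyl]⟩
      rw [this, measure_univ]
    · intro b _ c _ hbc
      simp only [Function.onFun]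
      rw [Set.disjoint_left]
      rintro x hxb hxc
      apply hbc
      funext j
      have h1 := hxb j j.isLt
      have h2 := hxc j j.isLt
      simp only [j.isLt, dif_pos] at h1 h2
      rw [← h1, ← h2]
    · intro b _; exact measurableSet_cyl _ _
  have keyc : ∀ b : Fin m → ZMod 2,
      haarG (cyl m (fun i => if h : i < m then b ⟨i, h⟩ else 0)) = haarG (cyl m 0) :=
    fun b => haarG_cyl_eq m _
  simp only [keyc, Finset.sum_const, Finset.card_univ, Fintype.card_fun, Fintype.card_fin,
    nsmul_eq_mul] at key
  rw [haarG_cyl_eq m a]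
  have h2m : ((2:ℝ≥0∞) ^ m) ≠ 0 := by positivity
  have h2mt : ((2:ℝ≥0∞) ^ m) ≠ ⊤ := ENNReal.pow_ne_top (by norm_num)
  rw [Nat.cast_pow, show ((Fintype.card (ZMod 2) : ℝ≥0∞)) = 2 by norm_num [ZMod.card]] at key
  calc haarG (cyl m 0) = (2 ^ m)⁻¹ * (2 ^ m * haarG (cyl m 0)) := by
        rw [← mul_assoc, ENNReal.inv_mul_cancel h2m h2mt, one_mul]
    _ = (2 ^ m)⁻¹ * 1 := by rw [key]
    _ = (2:ℝ≥0∞)⁻¹ ^ m := by rw [mul_one, ENNReal.inv_pow]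

lemma ofReal_half_pow (n : ℕ) : ENNReal.ofReal ((2:ℝ)⁻¹ ^ n) = (2:ℝ≥0∞)⁻¹ ^ n := by
  rw [ENNReal.ofReal_pow (by norm_num)]
  congr 1
  rw [ENNReal.ofReal_inv_of_pos (by norm_num)]
  norm_num

/-! ### Counting -/

lemma ncard_eq_count (R : Set ℕ) [DecidablePred (· ∈ R)] (n : ℕ) :
    (R ∩ Set.Iio n).ncard = Nat.count (· ∈ R) n := by
  rw [Nat.count_eq_card_filter_range]
  have : R ∩ Set.Iio n = ↑((Finset.range n).filter (· ∈ R)) := by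
    ext i
    simp only [Set.mem_inter_iff, Set.mem_Iio, Finset.coe_filter, Finset.mem_range,
      Set.mem_setOf_eq]
    tauto
  rw [this, Set.ncard_coe_finset]

/-! ### The embedding of the full group into `U_R` -/

def extR (R : Set ℕ) [DecidablePred (· ∈ R)] (y : G) : G :=
  fun i => if i ∈ R then y (Nat.count (· ∈ R) i) else 0

lemma extR_mem_UR (R : Set ℕ) [DecidablePred (· ∈ R)] (y : G) : extR R y ∈ UR R := by
  intro n hn
  simp [extR, hn]

lemma extR_agree_count {R : Set ℕ} [DecidablePred (· ∈ R)]
    (hR : {n | n ∈ R}.Infinite) {y y0 : G} {n : ℕ}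
    (h : ∀ i < n, extR R y i = extR R y0 i) :
    ∀ k < Nat.count (· ∈ R) n, y k = y0 k := by
  intro k hk
  have hnth_lt : Nat.nth (· ∈ R) k < n := Nat.nth_lt_of_lt_count hk
  have hmem : Nat.nth (· ∈ R) k ∈ R := Nat.nth_mem_of_infinite hR k
  have h2 := h _ hnth_lt
  simpa only [extR, if_pos hmem, Nat.count_nth_of_infinite hR] using h2

lemma extR_injective {R : Set ℕ} [DecidablePred (· ∈ R)]
    (hR : {n | n ∈ R}.Infinite) : Function.Injective (extR R) := by
  intro y y0 h
  funext k
  have hmem : Nat.nth (· ∈ R) k ∈ R := Nat.nth_mem_of_infinite hR k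
  have := congrFun h (Nat.nth (· ∈ R) k)
  simpa only [extR, if_pos hmem, Nat.count_nth_of_infinite hR] using this

lemma continuous_extR (R : Set ℕ) [DecidablePred (· ∈ R)] : Continuous (extR R) := by
  apply continuous_pi
  intro i
  simp only [extR]
  split_ifs
  · exact continuous_apply _
  · exact continuous_const

lemma isClosed_UR (R : Set ℕ) : IsClosed (UR R) := by
  have : UR R = ⋂ n ∈ {n | n ∉ R}, (fun x : G => x n) ⁻¹' {0} := by
    ext x; simp [UR]
  rw [this]
  exact isClosed_biInter fun n _ => IsClosed.preimage (continuous_apply n) isClosed_singleton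


lemma continuous_phi {X : Type*} [MetricSpace X] (φ : G → X)
    (hdist : ∀ x y : G, dist (φ x) (φ y) = cantorDist x y) : Continuous φ := by
  rw [continuous_iff_continuousAt]
  intro x
  rw [ContinuousAt, Metric.tendsto_nhds]
  intro ε hε
  obtain ⟨n, hn⟩ := exists_pow_lt_of_lt_one hε (show (2:ℝ)⁻¹ < 1 by norm_num)
  have hopen : IsOpen (cyl n x) := by
    have : cyl n x = ⋂ i ∈ Set.Iio n, (fun y : G => y i) ⁻¹' {x i} := by
      ext y; simp [cyl]
    rw [this]
    exact (Set.finite_Iio n).isOpen_biInter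
      (fun i _ => (continuous_apply i).isOpen_preimage _ (isOpen_discrete _))
  filter_upwards [hopen.mem_nhds (fun i _ => rfl)] with y hy
  rw [hdist]
  exact lt_of_le_of_lt (cantorDist_le_of_agree hy) hn

/-- In the Cantor group `E`, the Hausdorff dimension of the closed subgroup
`U_R` equals the lower asymptotic density of `R`. -/
theorem dimH_UR_eq_lower_density
    {X : Type*} [MetricSpace X] (φ : (ℕ → ZMod 2) → X)
    (hbij : Function.Bijective φ)
    (hdist : ∀ x y : ℕ → ZMod 2, dist (φ x) (φ y) = cantorDist x y)
    (R : Set ℕ) :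
    dimH (φ '' UR R) =
      ENNReal.ofReal (Filter.liminf
        (fun n : ℕ => ((R ∩ Set.Iio n).ncard : ℝ) / (n : ℝ)) Filter.atTop) := by
  classical
  borelize X
  set c : ℕ → ℕ := fun n => Nat.count (· ∈ R) n with hc
  have hfeq : (fun n : ℕ => ((R ∩ Set.Iio n).ncard : ℝ) / (n:ℝ))
      = fun n => (c n : ℝ) / n := funext fun n => by rw [ncard_eq_count]
  rw [hfeq]
  set f : ℕ → ℝ := fun n => (c n : ℝ) / n with hf
  set L := liminf f atTop with hL
  have hf0 : ∀ n, 0 ≤ f n := fun n => by positivity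
  have hf1 : ∀ n, f n ≤ 1 := by
    intro n
    rcases n.eq_zero_or_pos with rfl | hn
    · simp [hf]
    · rw [hf]
      rw [div_le_one (by exact_mod_cast hn)]
      exact_mod_cast Nat.count_le (· ∈ R) (n := n)
  have hbddb : IsBoundedUnder (· ≥ ·) atTop f := isBoundedUnder_of ⟨0, fun n => hf0 n⟩
  have hbdda : IsBoundedUnder (· ≤ ·) atTop f := isBoundedUnder_of ⟨1, fun n => hf1 n⟩
  have hL0 : 0 ≤ L :=
    le_liminf_of_le hbdda.isCoboundedUnder_ge (Eventually.of_forall hf0)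
  apply le_antisymm
  · -- Upper bound
    apply dimH_le
    intro d' hd'
    by_contra hlt
    push_neg at hlt
    have hmeas0 : μH[(d' : ℝ)] (φ '' UR R) = 0 := by
      have hLd : L < (d' : ℝ) := by
        rcases lt_or_ge L ((d' : ℝ)) with h | h
        · exact h
        · exfalso
          have : (d' : ℝ≥0∞) ≤ ENNReal.ofReal L := by
            rw [ENNReal.le_ofReal_iff_toReal_le (by simp) hL0]
            simpa using h
          exact absurd hlt (not_lt.2 this)
      set τ := (L + d') / 2 with hτ
      have hLτ : L < τ := by rw [hτ]; linarith
      have hτd : τ < (d' : ℝ) := by rw [hτ]; linarith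
      -- the covering
      set T : ∀ _ : ℕ, ({i : Fin _ // (i : ℕ) ∈ R} → ZMod 2) → Set X :=
        fun n b => φ '' {x | x ∈ UR R ∧ ∀ i : {i : Fin n // (i : ℕ) ∈ R}, x i = b i} with hT
      have hr0 : Tendsto (fun n : ℕ => (2:ℝ≥0∞)⁻¹ ^ n) atTop (nhds 0) :=
        ENNReal.tendsto_pow_atTop_nhds_zero_of_lt_one (ENNReal.inv_lt_one.2 one_lt_two)
      have hdiam : ∀ n (b : {i : Fin n // (i : ℕ) ∈ R} → ZMod 2),
          EMetric.diam (T n b) ≤ (2:ℝ≥0∞)⁻¹ ^ n := by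
        intro n b
        apply EMetric.diam_le
        rintro u ⟨x, ⟨hxU, hxb⟩, rfl⟩ v ⟨x', ⟨hxU', hxb'⟩, rfl⟩
        rw [edist_dist, hdist, ← ofReal_half_pow]
        apply ENNReal.ofReal_le_ofReal
        apply cantorDist_le_of_agree
        intro i hi
        by_cases hiR : i ∈ R
        · rw [hxb ⟨⟨i, hi⟩, hiR⟩, hxb' ⟨⟨i, hi⟩, hiR⟩]
        · rw [hxU i hiR, hxU' i hiR]
      have hcover : ∀ n : ℕ, φ '' UR R ⊆ ⋃ b, T n b := by
        rintro n u ⟨x, hx, rfl⟩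
        exact Set.mem_iUnion.2 ⟨fun i => x i, ⟨x, ⟨hx, fun i => rfl⟩, rfl⟩⟩
      have hle := Measure.hausdorffMeasure_le_liminf_sum (d' : ℝ) (φ '' UR R)
        (fun n : ℕ => (2:ℝ≥0∞)⁻¹ ^ n) hr0 T
        (Eventually.of_forall hdiam) (Eventually.of_forall hcover)
      -- bound each sum
      have hcard : ∀ n : ℕ, (Fintype.card {i : Fin n // (i : ℕ) ∈ R}) = c n := by
        intro n
        have e : {i : Fin n // (i : ℕ) ∈ R} ≃ (R ∩ Set.Iio n : Set ℕ) :=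
          { toFun := fun i => ⟨i.1, i.2, i.1.isLt⟩
            invFun := fun j => ⟨⟨j.1, j.2.2⟩, j.2.1⟩
            left_inv := fun i => rfl
            right_inv := fun j => rfl }
        have h1 : Fintype.card {i : Fin n // (i : ℕ) ∈ R} = (R ∩ Set.Iio n).ncard := by
          rw [← Nat.card_coe_set_eq, ← Nat.card_congr e, Nat.card_eq_fintype_card]
        rw [h1, ncard_eq_count]
      have hsum : ∀ n : ℕ, (∑ b : {i : Fin n // (i : ℕ) ∈ R} → ZMod 2,
          EMetric.diam (T n b) ^ (d' : ℝ))
          ≤ ENNReal.ofReal ((2:ℝ) ^ c n * ((2:ℝ)⁻¹ ^ n) ^ (d' : ℝ)) := by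
        intro n
        calc (∑ b : {i : Fin n // (i : ℕ) ∈ R} → ZMod 2, EMetric.diam (T n b) ^ (d' : ℝ))
            ≤ ∑ _b : {i : Fin n // (i : ℕ) ∈ R} → ZMod 2,
              ENNReal.ofReal (((2:ℝ)⁻¹ ^ n) ^ (d' : ℝ)) := by
              apply Finset.sum_le_sum
              intro b _
              rw [← ENNReal.ofReal_rpow_of_pos (by positivity), ofReal_half_pow]
              exact ENNReal.rpow_le_rpow (hdiam n b) d'.2
          _ = (Fintype.card ({i : Fin n // (i : ℕ) ∈ R} → ZMod 2)) *
              ENNReal.ofReal (((2:ℝ)⁻¹ ^ n) ^ (d' : ℝ)) := by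
              rw [Finset.sum_const, Finset.card_univ, nsmul_eq_mul]
          _ ≤ ENNReal.ofReal ((2:ℝ) ^ c n * ((2:ℝ)⁻¹ ^ n) ^ (d' : ℝ)) := by
              rw [Fintype.card_fun, hcard n, show (Fintype.card (ZMod 2)) = 2 from by
                norm_num [ZMod.card]]
              rw [ENNReal.ofReal_mul (by positivity), ← ENNReal.ofReal_natCast (2 ^ c n)]
              push_cast
              exact le_rfl
      have hfinal : liminf (fun n : ℕ => ∑ b : {i : Fin n // (i : ℕ) ∈ R} → ZMod 2,
          EMetric.diam (T n b) ^ (d' : ℝ)) atTop = 0 := by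
        apply le_antisymm _ zero_le
        have hbase : (0:ℝ) ≤ (2:ℝ) ^ (τ - d') := Real.rpow_nonneg (by norm_num) _
        have hbase1 : (2:ℝ) ^ (τ - (d':ℝ)) < 1 :=
          Real.rpow_lt_one_of_one_lt_of_neg one_lt_two (by linarith)
        have htend : Tendsto (fun n : ℕ => ((2:ℝ) ^ (τ - (d':ℝ))) ^ n) atTop (nhds 0) :=
          tendsto_pow_atTop_nhds_zero_of_lt_one hbase hbase1
        apply ENNReal.le_of_forall_pos_le_add
        intro ε hε _
        rw [zero_add]
        apply liminf_le_of_frequently_le'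
        have hfreq : ∃ᶠ n in atTop, f n < τ := frequently_lt_of_liminf_lt hbdda.isCoboundedUnder_ge hLτ
        have hev : ∀ᶠ n : ℕ in atTop, ((2:ℝ) ^ (τ - (d':ℝ))) ^ n < (ε:ℝ) ∧ 1 ≤ n := by
          exact (htend.eventually_lt_const (show (0:ℝ) < (ε:ℝ) by exact_mod_cast hε)).and
            (eventually_ge_atTop 1)
        apply (hfreq.and_eventually hev).mono
        rintro n ⟨hfn, hpow, hn1⟩
        refine (hsum n).trans ?_
        have hcτ : (c n : ℝ) ≤ τ * n := by
          have hn0 : (0:ℝ) < n := by exact_mod_cast hn1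
          have := (div_lt_iff₀ hn0).1 hfn
          linarith
        have hreal : (2:ℝ) ^ c n * ((2:ℝ)⁻¹ ^ n) ^ (d' : ℝ) ≤ ((2:ℝ) ^ (τ - (d':ℝ))) ^ n := by
          have h1 : ((2:ℝ)⁻¹ ^ n) = (2:ℝ) ^ (-(n:ℝ)) := by
            rw [Real.rpow_neg (by norm_num : (0:ℝ) ≤ 2), Real.rpow_natCast, inv_pow]
          have h2 : ((2:ℝ) ^ (-(n:ℝ))) ^ (d' : ℝ) = (2:ℝ) ^ (-(n:ℝ) * d') := by
            rw [← Real.rpow_mul (by norm_num)]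
          have h3 : (2:ℝ) ^ c n = (2:ℝ) ^ ((c n : ℝ)) := by
            rw [Real.rpow_natCast]
          have h4 : ((2:ℝ) ^ (τ - (d':ℝ))) ^ n = (2:ℝ) ^ ((τ - (d':ℝ)) * n) := by
            rw [← Real.rpow_natCast ((2:ℝ) ^ (τ - (d':ℝ))) n, ← Real.rpow_mul (by norm_num)]
          rw [h1, h2, h3, h4, ← Real.rpow_add (by norm_num)]
          apply Real.rpow_le_rpow_of_exponent_le one_le_two
          have : (d' : ℝ) * n ≥ 0 := by positivity
          nlinarith [hcτ]
        calc ENNReal.ofReal ((2:ℝ) ^ c n * ((2:ℝ)⁻¹ ^ n) ^ (d' : ℝ))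
            ≤ ENNReal.ofReal (((2:ℝ) ^ (τ - (d':ℝ))) ^ n) := ENNReal.ofReal_le_ofReal hreal
          _ ≤ (ε : ℝ≥0∞) := by
              rw [← ENNReal.ofReal_coe_nnreal]
              exact ENNReal.ofReal_le_ofReal hpow.le
      exact le_antisymm (hle.trans hfinal.le) zero_le
    rw [hmeas0] at hd'
    simp at hd'
  · -- Lower bound
    apply ENNReal.le_of_forall_nnreal_lt
    intro r hr
    rcases eq_or_ne r 0 with rfl | hr0
    · simp
    have hrpos : (0:ℝ) < r := NNReal.coe_pos.2 hr0.bot_lt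
    have hrL : (r : ℝ) < L := by
      have h1 := (ENNReal.lt_ofReal_iff_toReal_lt (a := (r:ℝ≥0∞)) (by simp)).1 hr
      simpa using h1
    have hLpos : 0 < L := hrpos.trans hrL
    have hRinf : {n | n ∈ R}.Infinite := by
      by_contra hfin
      rw [Set.not_infinite] at hfin
      have hfinR : R.Finite := by rwa [Set.setOf_mem_eq] at hfin
      have hcK : ∀ n, f n ≤ (R.ncard : ℝ) / n := by
        intro n
        rcases n.eq_zero_or_pos with rfl | hn
        · simp [hf]
        · have hle : (c n : ℝ) ≤ (R.ncard : ℝ) := by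
            have h2 : (R ∩ Set.Iio n).ncard ≤ R.ncard :=
              Set.ncard_le_ncard Set.inter_subset_left hfinR
            have h3 : c n = (R ∩ Set.Iio n).ncard := (ncard_eq_count R n).symm
            rw [h3]; exact_mod_cast h2
          have hn0 : (0:ℝ) < n := by exact_mod_cast hn
          rw [hf]
          show (c n : ℝ) / n ≤ (R.ncard : ℝ) / n
          gcongr
      have htend0 : Tendsto f atTop (nhds 0) :=
        squeeze_zero hf0 hcK (tendsto_const_div_atTop_nhds_zero_nat _)
      have : L = 0 := htend0.liminf_eq
      linarith
    have hev : ∀ᶠ m in atTop, (r:ℝ) < f m :=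
      eventually_lt_of_lt_liminf hrL hbddb
    obtain ⟨N0, hN0⟩ := eventually_atTop.1 (hev.and (eventually_ge_atTop 1))
    set N := max N0 1 with hN
    have hN1 : 1 ≤ N := le_max_right _ _
    have hNc : ∀ m, N ≤ m → (r:ℝ) * m ≤ (c m : ℝ) := by
      intro m hm
      obtain ⟨h1, h2⟩ := hN0 m (le_trans (le_max_left _ _) hm)
      have hm0 : (0:ℝ) < m := by exact_mod_cast h2
      rw [hf] at h1
      have := (lt_div_iff₀ hm0).1 h1
      linarith
    set ψ : G → X := fun y => φ (extR R y) with hψ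
    have hψcont : Continuous ψ := (continuous_phi φ hdist).comp (continuous_extR R)
    have hψmeas : Measurable ψ := hψcont.measurable
    set μ : Measure X := haarG.map ψ with hμ
    have hpow0 : Tendsto (fun m : ℕ => (2:ℝ≥0∞)⁻¹ ^ m) atTop (nhds 0) :=
      ENNReal.tendsto_pow_atTop_nhds_zero_of_lt_one (ENNReal.inv_lt_one.2 one_lt_two)
    have hfrost : μ ≤ μH[(r:ℝ)] := by
      apply Measure.le_hausdorffMeasure _ _ (ENNReal.ofReal ((2:ℝ)⁻¹ ^ N))
        (ENNReal.ofReal_pos.2 (by positivity))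
      intro A hA
      rcases Set.eq_empty_or_nonempty A with rfl | hAne
      · simp
      by_cases hrange : (A ∩ Set.range ψ).Nonempty
      · obtain ⟨w, hwA, y0, rfl⟩ := hrange
        set D := EMetric.diam A with hD
        have hDle : ∀ u ∈ A, edist u (ψ y0) ≤ D := fun u hu =>
          EMetric.edist_le_diam_of_mem hu hwA
        have hDlt : D ≠ ⊤ := (lt_of_le_of_lt hA ENNReal.ofReal_lt_top).ne
        set ρ := D.toReal with hρ
        have hρN : ρ ≤ (2:ℝ)⁻¹ ^ N := by
          have h2 := ENNReal.toReal_mono ENNReal.ofReal_ne_top hA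
          rwa [ENNReal.toReal_ofReal (by positivity)] at h2
        have hB : A ⊆ Metric.closedBall (ψ y0) ρ := by
          intro u hu
          rw [Metric.mem_closedBall, dist_edist]
          exact ENNReal.toReal_mono hDlt (hDle u hu)
        rcases eq_or_lt_of_le (show (0:ℝ) ≤ ρ from ENNReal.toReal_nonneg) with hρ0 | hρ0
        · -- diameter zero
          have hD0 : D = 0 := by
            rcases (ENNReal.toReal_eq_zero_iff D).1 hρ0.symm with h | h
            · exact h
            · exact absurd h hDlt
          have hAsub : A ⊆ {ψ y0} := by
            intro u hu
            have h3 := hDle u hu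
            rw [hD0, nonpos_iff_eq_zero, edist_eq_zero] at h3
            simp [h3]
          have hμsing : μ {ψ y0} = 0 := by
            rw [hμ, Measure.map_apply hψmeas (measurableSet_singleton _)]
            have hpre : ∀ m, ψ ⁻¹' {ψ y0} ⊆ cyl m y0 := by
              intro m y hy
              rw [Set.mem_preimage, Set.mem_singleton_iff] at hy
              have hexteq : extR R y = extR R y0 := hbij.injective hy
              have hyy0 : y = y0 := extR_injective hRinf hexteq
              intro i _
              rw [hyy0]
            have hle0 : ∀ m, haarG (ψ ⁻¹' {ψ y0}) ≤ (2:ℝ≥0∞)⁻¹ ^ m := fun m =>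
              (measure_mono (hpre m)).trans_eq (haarG_cyl m y0)
            exact le_antisymm (ge_of_tendsto' hpow0 hle0) zero_le
          exact ((measure_mono hAsub).trans hμsing.le).trans zero_le
        · -- positive diameter
          have hexn : ∃ k : ℕ, (2:ℝ)⁻¹ ^ (k+1) ≤ ρ := by
            obtain ⟨k, hk⟩ := exists_pow_lt_of_lt_one hρ0 (show (2:ℝ)⁻¹ < 1 by norm_num)
            exact ⟨k, le_trans
              (pow_le_pow_of_le_one (by norm_num) (by norm_num) (Nat.le_succ k)) hk.le⟩
          set n := Nat.find hexn with hn
          have hn1 : (2:ℝ)⁻¹ ^ (n+1) ≤ ρ := Nat.find_spec hexn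
          have hn2 : ρ < (2:ℝ)⁻¹ ^ n := by
            rcases Nat.eq_zero_or_pos n with hn0 | hn0
            · rw [hn0, pow_zero]
              calc ρ ≤ (2:ℝ)⁻¹ ^ N := hρN
                _ ≤ (2:ℝ)⁻¹ ^ 1 := pow_le_pow_of_le_one (by norm_num) (by norm_num) hN1
                _ < 1 := by norm_num
            · obtain ⟨m, hm⟩ : ∃ m, n = m + 1 := ⟨n - 1, by omega⟩
              have h4 : ¬((2:ℝ)⁻¹ ^ (m + 1) ≤ ρ) :=
                Nat.find_min hexn (show m < Nat.find hexn from by rw [← hn]; omega)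
              rw [hm]
              exact not_le.1 h4
          have hNn : N ≤ n + 1 := by
            by_contra hcon
            push_neg at hcon
            have h5 : (2:ℝ)⁻¹ ^ N < (2:ℝ)⁻¹ ^ (n+1) :=
              pow_lt_pow_right_of_lt_one₀ (by norm_num) (by norm_num) hcon
            linarith
          have hpre : ψ ⁻¹' (Metric.closedBall (ψ y0) ρ) ⊆ cyl (c (n+1)) y0 := by
            intro y hy
            rw [Set.mem_preimage, Metric.mem_closedBall] at hy
            have hy' : dist (φ (extR R y)) (φ (extR R y0)) ≤ ρ := hy
            rw [hdist] at hy'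
            have hdlt : cantorDist (extR R y) (extR R y0) < (2:ℝ)⁻¹ ^ n :=
              lt_of_le_of_lt hy' hn2
            have hagree := agree_of_cantorDist_lt hdlt
            intro k hk
            exact extR_agree_count hRinf (fun i hi => hagree i (Nat.lt_succ_iff.1 hi)) k hk
          calc μ A ≤ μ (Metric.closedBall (ψ y0) ρ) := measure_mono hB
            _ = haarG (ψ ⁻¹' Metric.closedBall (ψ y0) ρ) :=
                Measure.map_apply hψmeas measurableSet_closedBall
            _ ≤ haarG (cyl (c (n+1)) y0) := measure_mono hpre
            _ = (2:ℝ≥0∞)⁻¹ ^ (c (n+1)) := haarG_cyl _ _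
            _ ≤ D ^ (r:ℝ) := by
                rw [← ofReal_half_pow,
                  show D = ENNReal.ofReal ρ from (ENNReal.ofReal_toReal hDlt).symm,
                  ENNReal.ofReal_rpow_of_pos hρ0]
                apply ENNReal.ofReal_le_ofReal
                have hc1 : (r:ℝ) * (n+1) ≤ (c (n+1) : ℝ) := by
                  have := hNc (n+1) hNn
                  push_cast at this ⊢
                  linarith
                calc (2:ℝ)⁻¹ ^ c (n+1) = (2:ℝ) ^ (-(c (n+1) : ℝ)) := by
                      rw [Real.rpow_neg (by norm_num : (0:ℝ) ≤ 2), Real.rpow_natCast, inv_pow]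
                  _ ≤ (2:ℝ) ^ (-((r:ℝ) * (n+1))) :=
                      Real.rpow_le_rpow_of_exponent_le one_le_two (by push_cast; linarith)
                  _ = ((2:ℝ)⁻¹ ^ (n+1)) ^ (r:ℝ) := by
                      have h6 : ((2:ℝ)⁻¹ ^ (n+1) : ℝ) = (2:ℝ) ^ (-((n:ℝ)+1)) := by
                        have h7 : ((n:ℝ)+1) = (((n+1:ℕ)):ℝ) := by push_cast; ring
                        rw [Real.rpow_neg (by norm_num : (0:ℝ) ≤ 2), h7, Real.rpow_natCast,
                          inv_pow]
                      rw [h6, ← Real.rpow_mul (by norm_num : (0:ℝ) ≤ 2)]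
                      congr 1
                      push_cast
                      ring
                  _ ≤ ρ ^ (r:ℝ) := Real.rpow_le_rpow (by positivity) hn1 r.2
      · -- A misses the range of ψ
        have hsub : A ⊆ (Set.range ψ)ᶜ := by
          intro u hu
          intro hmem
          exact hrange ⟨u, hu, hmem⟩
        have hclosed : IsClosed (Set.range ψ) := (isCompact_range hψcont).isClosed
        have h6 : μ A ≤ μ ((Set.range ψ)ᶜ) := measure_mono hsub
        have h7 : μ ((Set.range ψ)ᶜ) = 0 := by
          rw [hμ, Measure.map_apply hψmeas hclosed.measurableSet.compl]
          have : ψ ⁻¹' (Set.range ψ)ᶜ = ∅ := by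
            ext y; simp [Set.mem_range_self]
          rw [this, measure_empty]
        exact (h6.trans h7.le).trans zero_le
    have hsmeas : MeasurableSet (φ '' UR R) := by
      have hcomp : IsCompact (UR R) := (isClosed_UR R).isCompact
      exact (hcomp.image (continuous_phi φ hdist)).isClosed.measurableSet
    have hμs : μ (φ '' UR R) = 1 := by
      rw [hμ, Measure.map_apply hψmeas hsmeas]
      have : ψ ⁻¹' (φ '' UR R) = Set.univ := by
        ext y
        simp only [Set.mem_preimage, Set.mem_univ, iff_true]
        exact ⟨extR R y, extR_mem_UR R y, rfl⟩
      rw [this]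
      exact measure_univ
    have hne : μH[(r:ℝ)] (φ '' UR R) ≠ 0 := by
      have h8 := Measure.le_iff'.1 hfrost (φ '' UR R)
      rw [hμs] at h8
      intro h0
      rw [h0] at h8
      simp at h8
    exact le_dimH_of_hausdorffMeasure_ne_zero hne

end CantorGroup
end

section
/- Let E be the Cantor group, the set of all sequences x : ℕ → ℤ/2ℤ under pointwise addition, equipped with the ultrametric d(x,y) = 2^{-n} for distinct x,y, where n is the least index with x(n) ≠ y(n). For R ⊆ ℕ, let U_R = { x ∈ E : x(n) = 0 for all n ∉ R }, a closed subgroup of E. Then the upper box dimension of U_R equals the upper asymptotic density of R, i.e. limsup_{α→0+} log N_α(U_R)/log(1/α) = limsup_{n→∞} |R ∩ {0,…,n−1}| / n, and the lower box dimension of U_R equals the lower asymptotic density liminf_{n→∞} |R ∩ {0,…,n−1}| / n. -/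
open Filter MeasureTheory

namespace CantorGroup

/-- `coverNum A α` is the least cardinality of a cover of `A` by sets of diameter at
most `α` (with junk value `0` if no finite such cover exists). -/
noncomputable def coverNum {X : Type*} [MetricSpace X] (A : Set X) (α : ℝ) : ℕ :=
  sInf {k : ℕ | ∃ 𝒞 : Finset (Set X), 𝒞.card = k ∧
    (∀ E ∈ 𝒞, Metric.diam E ≤ α) ∧ A ⊆ ⋃ E ∈ 𝒞, E}

/-- The lower box (Minkowski) dimension of a set in a metric space. -/
noncomputable def lowerBoxDim {X : Type*} [MetricSpace X] (A : Set X) : ℝ :=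
  Filter.liminf (fun α : ℝ => Real.log (coverNum A α) / Real.log (1 / α))
    (nhdsWithin 0 (Set.Ioi 0))

/-- The upper box (Minkowski) dimension of a set in a metric space. -/
noncomputable def upperBoxDim {X : Type*} [MetricSpace X] (A : Set X) : ℝ :=
  Filter.limsup (fun α : ℝ => Real.log (coverNum A α) / Real.log (1 / α))
    (nhdsWithin 0 (Set.Ioi 0))

/-! ### Auxiliary facts about `cantorDist` -/

open Classical in
lemma cantorDist_le_pow_iff (x y : ℕ → ZMod 2) (n : ℕ) :
    cantorDist x y ≤ (2:ℝ)⁻¹ ^ n ↔ ∀ i < n, x i = y i := by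
  unfold cantorDist
  split_ifs with h
  · constructor
    · intro hle i hi
      by_contra hne
      have hf : Nat.find h ≤ i := Nat.find_le hne
      have : n ≤ Nat.find h := by
        by_contra hn
        push_neg at hn
        have : (2:ℝ)⁻¹ ^ n < (2:ℝ)⁻¹ ^ Nat.find h :=
          pow_lt_pow_right_of_lt_one₀ (by norm_num) (by norm_num) hn
        linarith
      omega
    · intro hall
      apply pow_le_pow_of_le_one (by norm_num) (by norm_num)
      rw [Nat.le_find_iff]
      intro m hm hne
      exact hne (hall m hm)
  · constructor
    · intro _ i _
      push_neg at h
      exact h i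
    · intro _
      positivity

open Classical in
lemma cantorDist_lt_pow (x y : ℕ → ZMod 2) (n : ℕ)
    (h : cantorDist x y < (2:ℝ)⁻¹ ^ n) : ∀ i ≤ n, x i = y i := by
  intro i hi
  by_contra hne
  have he : ∃ m, x m ≠ y m := ⟨i, hne⟩
  rw [cantorDist, dif_pos he] at h
  have h1 : Nat.find he ≤ i := Nat.find_le hne
  have h2 : n < Nat.find he := by
    by_contra hn
    push_neg at hn
    have : (2:ℝ)⁻¹ ^ Nat.find he ≥ (2:ℝ)⁻¹ ^ n :=
      pow_le_pow_of_le_one (by norm_num) (by norm_num) hn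
    linarith
  omega

lemma cantorDist_le_one (x y : ℕ → ZMod 2) : cantorDist x y ≤ 1 := by
  have := (cantorDist_le_pow_iff x y 0).2 (by omega)
  simpa using this

/-! ### Truncations supported on `R ∩ [0, n)` -/

lemma finite_inter (R : Set ℕ) (n : ℕ) : (R ∩ Set.Iio n).Finite :=
  (Set.finite_Iio n).inter_of_right R

noncomputable def finS (R : Set ℕ) (n : ℕ) : Finset ℕ := (finite_inter R n).toFinset

lemma mem_finS {R : Set ℕ} {n i : ℕ} : i ∈ finS R n ↔ i ∈ R ∧ i < n := by
  simp [finS, Set.Finite.mem_toFinset, Set.mem_Iio]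

lemma card_finS (R : Set ℕ) (n : ℕ) : (finS R n).card = (R ∩ Set.Iio n).ncard := by
  rw [Set.ncard_eq_toFinset_card _ (finite_inter R n)]; rfl

open Classical in
noncomputable def truncs (R : Set ℕ) (n : ℕ) : Finset (ℕ → ZMod 2) :=
  Finset.image
    (fun f : {i // i ∈ finS R n} → ZMod 2 =>
      fun i => if h : i ∈ finS R n then f ⟨i, h⟩ else 0)
    Finset.univ

open Classical in
lemma card_truncs (R : Set ℕ) (n : ℕ) :
    (truncs R n).card = 2 ^ (R ∩ Set.Iio n).ncard := by
  rw [truncs, Finset.card_image_of_injective _ ?_, Finset.card_univ, Fintype.card_fun]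
  · simp [card_finS]
  · intro f g hfg
    funext i
    have := congrFun hfg i.1
    simpa [i.2] using this

lemma truncs_mem_zero {R : Set ℕ} {n : ℕ} {t : ℕ → ZMod 2} (ht : t ∈ truncs R n) :
    ∀ i, i ∉ finS R n → t i = 0 := by
  classical
  rw [truncs, Finset.mem_image] at ht
  obtain ⟨f, -, rfl⟩ := ht
  intro i hi
  simp [hi]

lemma truncs_subset_UR {R : Set ℕ} {n : ℕ} {t : ℕ → ZMod 2} (ht : t ∈ truncs R n) :
    t ∈ UR R := by
  intro i hi
  exact truncs_mem_zero ht i (fun hm => hi (mem_finS.1 hm).1)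

lemma exists_trunc {R : Set ℕ} {n : ℕ} {x : ℕ → ZMod 2} (hx : x ∈ UR R) :
    ∃ t ∈ truncs R n, ∀ i < n, x i = t i := by
  classical
  refine ⟨fun i => if h : i ∈ finS R n then x i else 0, ?_, ?_⟩
  · rw [truncs, Finset.mem_image]
    exact ⟨fun j => x j.1, Finset.mem_univ _, by funext i; split_ifs with h <;> simp [h]⟩
  · intro i hi
    simp only []
    split_ifs with h
    · rfl
    · exact hx i (fun hr => h (mem_finS.2 ⟨hr, hi⟩))

lemma truncs_ext {R : Set ℕ} {n : ℕ} {t₁ t₂ : ℕ → ZMod 2}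
    (h₁ : t₁ ∈ truncs R n) (h₂ : t₂ ∈ truncs R n)
    (h : ∀ i < n, t₁ i = t₂ i) : t₁ = t₂ := by
  funext i
  by_cases hi : i ∈ finS R n
  · exact h i (mem_finS.1 hi).2
  · rw [truncs_mem_zero h₁ i hi, truncs_mem_zero h₂ i hi]

attribute [irreducible] truncs

/-! ### Evaluation of the covering numbers of `U_R` -/

section Cover

variable {X : Type*} [MetricSpace X] (φ : (ℕ → ZMod 2) → X)
  (hbij : Function.Bijective φ)
  (hdist : ∀ x y : ℕ → ZMod 2, dist (φ x) (φ y) = cantorDist x y)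
  (R : Set ℕ)

include hbij hdist in
lemma all_bounded (s : Set X) : Bornology.IsBounded s := by
  apply Bornology.IsBounded.subset (Metric.isBounded_iff.2 ?_) (Set.subset_univ s)
  refine ⟨1, fun x _ y _ => ?_⟩
  obtain ⟨a, rfl⟩ := hbij.2 x
  obtain ⟨b, rfl⟩ := hbij.2 y
  rw [hdist]
  exact cantorDist_le_one a b

include hdist in
lemma coverNum_le (n : ℕ) (α : ℝ) (h1 : (2:ℝ)⁻¹ ^ n ≤ α) :
    coverNum (φ '' UR R) α ≤ 2 ^ (R ∩ Set.Iio n).ncard := by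
  classical
  set 𝒞 : Finset (Set X) :=
    (truncs R n).image (fun t => φ '' {y | ∀ i < n, y i = t i}) with h𝒞
  have hmem : 𝒞.card ∈ {k : ℕ | ∃ 𝒞 : Finset (Set X), 𝒞.card = k ∧
      (∀ E ∈ 𝒞, Metric.diam E ≤ α) ∧ (φ '' UR R) ⊆ ⋃ E ∈ 𝒞, E} := by
    refine ⟨𝒞, rfl, ?_, ?_⟩
    · intro E hE
      rw [h𝒞, Finset.mem_image] at hE
      obtain ⟨t, -, rfl⟩ := hE
      apply Metric.diam_le_of_forall_dist_le (le_trans (by positivity) h1)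
      rintro _ ⟨y₁, hy₁, rfl⟩ _ ⟨y₂, hy₂, rfl⟩
      rw [hdist]
      refine le_trans ((cantorDist_le_pow_iff y₁ y₂ n).2 ?_) h1
      intro i hi
      rw [hy₁ i hi, hy₂ i hi]
    · rintro _ ⟨x, hx, rfl⟩
      obtain ⟨t, ht, hxt⟩ := exists_trunc (n := n) hx
      apply Set.mem_biUnion (Finset.mem_image_of_mem _ ht)
      exact ⟨x, fun i hi => hxt i hi, rfl⟩
  calc coverNum (φ '' UR R) α ≤ 𝒞.card := Nat.sInf_le hmem
    _ ≤ (truncs R n).card := Finset.card_image_le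
    _ = 2 ^ (R ∩ Set.Iio n).ncard := card_truncs R n

set_option maxHeartbeats 1000000 in
include hbij hdist in
lemma le_coverNum (n : ℕ) (α : ℝ) (h1 : (2:ℝ)⁻¹ ^ n ≤ α)
    (h2 : ∀ x y : ℕ → ZMod 2, cantorDist x y ≤ α → ∀ i < n, x i = y i) :
    2 ^ (R ∩ Set.Iio n).ncard ≤ coverNum (φ '' UR R) α := by
  classical
  have hne : {k : ℕ | ∃ 𝒞 : Finset (Set X), 𝒞.card = k ∧
      (∀ E ∈ 𝒞, Metric.diam E ≤ α) ∧ (φ '' UR R) ⊆ ⋃ E ∈ 𝒞, E}.Nonempty := by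
    refine ⟨((truncs R n).image (fun t => φ '' {y | ∀ i < n, y i = t i})).card,
      (truncs R n).image (fun t => φ '' {y | ∀ i < n, y i = t i}), rfl, ?_, ?_⟩
    · intro E hE
      rw [Finset.mem_image] at hE
      obtain ⟨t, -, rfl⟩ := hE
      apply Metric.diam_le_of_forall_dist_le (le_trans (by positivity) h1)
      rintro _ ⟨y₁, hy₁, rfl⟩ _ ⟨y₂, hy₂, rfl⟩
      rw [hdist]
      refine le_trans ((cantorDist_le_pow_iff y₁ y₂ n).2 ?_) h1
      intro i hi
      rw [hy₁ i hi, hy₂ i hi]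
    · rintro _ ⟨x, hx, rfl⟩
      obtain ⟨t, ht, hxt⟩ := exists_trunc (n := n) hx
      apply Set.mem_biUnion (Finset.mem_image_of_mem _ ht)
      exact ⟨x, fun i hi => hxt i hi, rfl⟩
  obtain ⟨𝒞, hcard, hdiam, hcover⟩ := Nat.sInf_mem hne
  rw [coverNum, ← hcard, ← card_truncs R n]
  set F : (ℕ → ZMod 2) → Set X := fun t =>
    if h : ∃ E ∈ 𝒞, φ t ∈ E then h.choose else ∅ with hF
  apply Finset.card_le_card_of_injOn F
  · intro t ht
    have hφt : φ t ∈ ⋃ E ∈ 𝒞, E := hcover ⟨t, truncs_subset_UR ht, rfl⟩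
    rw [Set.mem_iUnion₂] at hφt
    obtain ⟨E, hE, hxE⟩ := hφt
    have hex : ∃ E ∈ 𝒞, φ t ∈ E := ⟨E, hE, hxE⟩
    rw [hF]; simp only [dif_pos hex]
    exact hex.choose_spec.1
  · intro t₁ ht₁ t₂ ht₂ heq
    have hex : ∀ t, t ∈ truncs R n → ∃ E ∈ 𝒞, φ t ∈ E := by
      intro t ht
      have hφt : φ t ∈ ⋃ E ∈ 𝒞, E := hcover ⟨t, truncs_subset_UR ht, rfl⟩
      rw [Set.mem_iUnion₂] at hφt
      obtain ⟨E, hE, hxE⟩ := hφt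
      exact ⟨E, hE, hxE⟩
    have h₁ := hex t₁ ht₁
    have h₂ := hex t₂ ht₂
    have e₁ : F t₁ = h₁.choose := by rw [hF]; simp only [dif_pos h₁]
    have e₂ : F t₂ = h₂.choose := by rw [hF]; simp only [dif_pos h₂]
    have hm₁ : φ t₁ ∈ F t₁ := by rw [e₁]; exact h₁.choose_spec.2
    have hm₂ : φ t₂ ∈ F t₁ := by rw [heq, e₂]; exact h₂.choose_spec.2
    have hE𝒞 : F t₁ ∈ 𝒞 := by rw [e₁]; exact h₁.choose_spec.1
    have hd : dist (φ t₁) (φ t₂) ≤ α :=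
      le_trans (Metric.dist_le_diam_of_mem (all_bounded φ hbij hdist _) hm₁ hm₂)
        (hdiam _ hE𝒞)
    rw [hdist] at hd
    exact truncs_ext ht₁ ht₂ (h2 t₁ t₂ hd)

end Cover

/-! ### The scale index -/

open Classical in
noncomputable def idx (α : ℝ) : ℕ :=
  if h : ∃ n : ℕ, (2:ℝ)⁻¹ ^ n ≤ α then Nat.find h else 0

lemma idx_exists {α : ℝ} (h : 0 < α) : ∃ n : ℕ, (2:ℝ)⁻¹ ^ n ≤ α := by
  obtain ⟨n, hn⟩ := exists_pow_lt_of_lt_one h (by norm_num : (2:ℝ)⁻¹ < 1)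
  exact ⟨n, hn.le⟩

open Classical in
lemma pow_idx_le {α : ℝ} (h : 0 < α) : (2:ℝ)⁻¹ ^ (idx α) ≤ α := by
  rw [idx, dif_pos (idx_exists h)]
  exact Nat.find_spec (idx_exists h)

open Classical in
lemma idx_le {α : ℝ} (h : 0 < α) {m : ℕ} (hm : (2:ℝ)⁻¹ ^ m ≤ α) : idx α ≤ m := by
  rw [idx, dif_pos (idx_exists h)]
  exact Nat.find_le hm

open Classical in
lemma lt_pow_of_lt_idx {α : ℝ} (h : 0 < α) {m : ℕ} (hm : m < idx α) : α < (2:ℝ)⁻¹ ^ m := by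
  rw [idx, dif_pos (idx_exists h)] at hm
  have := Nat.find_min (idx_exists h) hm
  linarith [lt_of_not_ge this]

lemma idx_pos {α : ℝ} (h0 : 0 < α) (h1 : α < 1) : 1 ≤ idx α := by
  by_contra h
  push_neg at h
  interval_cases h' : idx α
  · have := pow_idx_le h0
    rw [h'] at this
    simp at this
    linarith

lemma two_le_idx {α : ℝ} (h0 : 0 < α) (h1 : α < 2⁻¹) : 2 ≤ idx α := by
  by_contra h
  push_neg at h
  have h2 : (2:ℝ)⁻¹ ^ (idx α) ≤ α := pow_idx_le h0
  have h3 : (2:ℝ)⁻¹ ^ 1 ≤ (2:ℝ)⁻¹ ^ (idx α) :=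
    pow_le_pow_of_le_one (by norm_num) (by norm_num) (by omega)
  rw [pow_one] at h3
  linarith

lemma lt_idx_of_lt_pow {α : ℝ} (h0 : 0 < α) {k : ℕ} (hk : α < (2:ℝ)⁻¹ ^ k) :
    k < idx α := by
  by_contra h
  push_neg at h
  have : (2:ℝ)⁻¹ ^ k ≤ (2:ℝ)⁻¹ ^ (idx α) :=
    pow_le_pow_of_le_one (by norm_num) (by norm_num) h
  linarith [pow_idx_le h0]

lemma idx_pow (n : ℕ) : idx ((2:ℝ)⁻¹ ^ n) = n := by
  have h0 : (0:ℝ) < (2:ℝ)⁻¹ ^ n := by positivity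
  refine le_antisymm (idx_le h0 le_rfl) ?_
  by_contra h
  push_neg at h
  have h2 : (2:ℝ)⁻¹ ^ n < (2:ℝ)⁻¹ ^ (idx ((2:ℝ)⁻¹ ^ n)) :=
    pow_lt_pow_right_of_lt_one₀ (by norm_num) (by norm_num) h
  linarith [pow_idx_le h0]

lemma ncard_Iio' (n : ℕ) : (Set.Iio n).ncard = n := by
  rw [← Nat.card_coe_set_eq, Nat.card_eq_fintype_card]
  simp

lemma ncard_inter_le (R : Set ℕ) (n : ℕ) : (R ∩ Set.Iio n).ncard ≤ n := by
  calc (R ∩ Set.Iio n).ncard ≤ (Set.Iio n).ncard :=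
        Set.ncard_le_ncard Set.inter_subset_right (Set.finite_Iio n)
    _ = n := ncard_Iio' n

/-! ### The filter transfer lemma -/

lemma limits_aux (g : ℝ → ℝ) (d : ℕ → ℝ)
    (hd0 : ∀ n, 0 ≤ d n) (hd1 : ∀ n, d n ≤ 1)
    (hsand : ∀ α : ℝ, 0 < α → α < 2⁻¹ →
      d (idx α) ≤ g α ∧ g α ≤ d (idx α) + 1 / ((idx α : ℝ) - 1))
    (hval : ∀ n : ℕ, 1 ≤ n → g ((2:ℝ)⁻¹ ^ n) = d n) :
    limsup g (nhdsWithin 0 (Set.Ioi 0)) = limsup d atTop ∧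
      liminf g (nhdsWithin 0 (Set.Ioi 0)) = liminf d atTop := by
  set F := nhdsWithin (0:ℝ) (Set.Ioi 0) with hFdef
  have hIoo : ∀ᶠ α in F, 0 < α ∧ α < 2⁻¹ := by
    have : Set.Ioo (0:ℝ) 2⁻¹ ∈ F :=
      Ioo_mem_nhdsGT_of_mem (by constructor <;> norm_num)
    filter_upwards [this] with α hα using ⟨hα.1, hα.2⟩
  have hidxk : ∀ k : ℕ, ∀ᶠ α in F, k < idx α := by
    intro k
    have : Set.Ioo (0:ℝ) ((2:ℝ)⁻¹^k) ∈ F :=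
      Ioo_mem_nhdsGT_of_mem ⟨le_refl 0, by positivity⟩
    filter_upwards [this] with α hα using lt_idx_of_lt_pow hα.1 hα.2
  have hinv : ∀ α : ℝ, 0 < α → α < 2⁻¹ → 1 / ((idx α : ℝ) - 1) ≤ 1 := by
    intro α h0 h1
    have h2 : (2:ℕ) ≤ idx α := two_le_idx h0 h1
    have h2' : (1:ℝ) ≤ (idx α : ℝ) - 1 := by
      have : (2:ℝ) ≤ (idx α : ℝ) := by exact_mod_cast h2
      linarith
    rw [div_le_one (by linarith)]
    linarith
  have ev_le2 : ∀ᶠ α in F, g α ≤ 2 := by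
    filter_upwards [hIoo] with α hα
    have := (hsand α hα.1 hα.2).2
    have h1 := hd1 (idx α)
    have h2 := hinv α hα.1 hα.2
    linarith
  have ev_ge0 : ∀ᶠ α in F, 0 ≤ g α := by
    filter_upwards [hIoo] with α hα
    exact le_trans (hd0 _) (hsand α hα.1 hα.2).1
  have hgbU : IsBoundedUnder (· ≤ ·) F g := isBoundedUnder_of_eventually_le ev_le2
  have hgbL : IsBoundedUnder (· ≥ ·) F g := isBoundedUnder_of_eventually_ge ev_ge0
  have hdbU : IsBoundedUnder (· ≤ ·) atTop d :=
    isBoundedUnder_of_eventually_le (Eventually.of_forall hd1)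
  have hdbL : IsBoundedUnder (· ≥ ·) atTop d :=
    isBoundedUnder_of_eventually_ge (Eventually.of_forall hd0)
  have htpow : Tendsto (fun n : ℕ => (2:ℝ)⁻¹ ^ n) atTop F := by
    apply tendsto_nhdsWithin_of_tendsto_nhds_of_eventually_within
    · exact tendsto_pow_atTop_nhds_zero_of_lt_one (by norm_num) (by norm_num)
    · exact Eventually.of_forall fun n => Set.mem_Ioi.2 (by positivity)
  constructor
  · apply le_antisymm
    · apply le_of_forall_pos_le_add
      intro ε hε
      have h1 : ∀ᶠ n in atTop, d n < limsup d atTop + ε/2 :=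
        eventually_lt_of_limsup_lt (by linarith) hdbU
      obtain ⟨N, hN⟩ := eventually_atTop.1 h1
      apply limsup_le_of_le (hgbL.isCoboundedUnder_le)
      filter_upwards [hIoo, hidxk (max N ⌈2/ε⌉₊)] with α hα hk
      obtain ⟨h0, h1'⟩ := hα
      have hs := hsand α h0 h1'
      have hdlt : d (idx α) < limsup d atTop + ε/2 := hN _ (le_trans (le_max_left _ _) hk.le)
      have hceil : (2/ε : ℝ) ≤ (idx α : ℝ) - 1 := by
        have h3 : (⌈2/ε⌉₊ : ℝ) + 1 ≤ (idx α : ℝ) := by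
          have : ⌈2/ε⌉₊ + 1 ≤ idx α := by
            have := le_trans (le_max_right N _) hk.le
            omega
          exact_mod_cast this
        linarith [Nat.le_ceil (2/ε)]
      have hinv2 : 1 / ((idx α : ℝ) - 1) ≤ ε/2 := by
        have h4 : (0:ℝ) < 2/ε := by positivity
        calc 1 / ((idx α : ℝ) - 1) ≤ 1 / (2/ε) := one_div_le_one_div_of_le h4 hceil
          _ = ε/2 := by rw [one_div_div]
      linarith [hs.2]
    · apply le_of_forall_pos_le_add
      intro ε hε
      have hfr : ∃ᶠ n in atTop, limsup d atTop - ε < d n :=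
        frequently_lt_of_lt_limsup (hdbL.isCoboundedUnder_le) (by linarith)
      have hfr2 : ∃ᶠ n in atTop, limsup d atTop - ε ≤ g ((2:ℝ)⁻¹ ^ n) := by
        apply (hfr.and_eventually (eventually_ge_atTop 1)).mono
        rintro n ⟨h1, h2⟩
        rw [hval n h2]
        linarith
      have := le_limsup_of_frequently_le (htpow.frequently hfr2) hgbU
      linarith
  · apply le_antisymm
    · apply le_of_forall_pos_le_add
      intro ε hε
      have hfr : ∃ᶠ n in atTop, d n < liminf d atTop + ε :=
        frequently_lt_of_liminf_lt (hdbU.isCoboundedUnder_ge) (by linarith)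
      have hfr2 : ∃ᶠ n in atTop, g ((2:ℝ)⁻¹ ^ n) ≤ liminf d atTop + ε := by
        apply (hfr.and_eventually (eventually_ge_atTop 1)).mono
        rintro n ⟨h1, h2⟩
        rw [hval n h2]
        linarith
      exact liminf_le_of_frequently_le (htpow.frequently hfr2) hgbL
    · apply le_of_forall_pos_le_add
      intro ε hε
      have h1 : ∀ᶠ n in atTop, liminf d atTop - ε < d n :=
        eventually_lt_of_lt_liminf (by linarith) hdbL
      obtain ⟨N, hN⟩ := eventually_atTop.1 h1
      have hev : ∀ᶠ α in F, liminf d atTop - ε ≤ g α := by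
        filter_upwards [hIoo, hidxk N] with α hα hk
        have hs := (hsand α hα.1 hα.2).1
        have := hN _ hk.le
        linarith
      have := le_liminf_of_le (hgbU.isCoboundedUnder_ge) hev
      linarith

/-! ### Main theorem -/

/-- In the Cantor group `E`, the upper box dimension of the closed subgroup
`U_R` equals the upper asymptotic density of `R`, and the lower box dimension of `U_R` equals
the lower asymptotic density of `R`. -/
theorem boxDims_UR_eq_densities
    {X : Type*} [MetricSpace X] (φ : (ℕ → ZMod 2) → X)
    (hbij : Function.Bijective φ)
    (hdist : ∀ x y : ℕ → ZMod 2, dist (φ x) (φ y) = cantorDist x y)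
    (R : Set ℕ) :
    upperBoxDim (φ '' UR R) =
        Filter.limsup (fun n : ℕ => ((R ∩ Set.Iio n).ncard : ℝ) / (n : ℝ)) Filter.atTop ∧
      lowerBoxDim (φ '' UR R) =
        Filter.liminf (fun n : ℕ => ((R ∩ Set.Iio n).ncard : ℝ) / (n : ℝ)) Filter.atTop := by
  set A := φ '' UR R with hA
  set d : ℕ → ℝ := fun n => ((R ∩ Set.Iio n).ncard : ℝ) / (n : ℝ) with hd
  set g : ℝ → ℝ := fun α => Real.log (coverNum A α) / Real.log (1 / α) with hg
  -- covering number value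
  have hcov : ∀ α : ℝ, 0 < α → α < 1 →
      coverNum A α = 2 ^ (R ∩ Set.Iio (idx α)).ncard := by
    intro α h0 h1
    have hn1 : 1 ≤ idx α := idx_pos h0 h1
    have hlt : α < (2:ℝ)⁻¹ ^ (idx α - 1) := lt_pow_of_lt_idx h0 (by omega)
    refine le_antisymm (coverNum_le φ hdist R _ α (pow_idx_le h0)) ?_
    refine le_coverNum φ hbij hdist R _ α (pow_idx_le h0) ?_
    intro x y hxy i hi
    exact cantorDist_lt_pow x y (idx α - 1) (lt_of_le_of_lt hxy hlt) i (by omega)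
  -- value of g at a scale α : d(idx α) ≤ g α ≤ ...
  have hglog : ∀ α : ℝ, 0 < α → α < 1 →
      g α = ((R ∩ Set.Iio (idx α)).ncard : ℝ) * Real.log 2 / Real.log (1/α) := by
    intro α h0 h1
    rw [hg]
    simp only [hcov α h0 h1]
    push_cast
    rw [Real.log_pow]
  have hsand : ∀ α : ℝ, 0 < α → α < 2⁻¹ →
      d (idx α) ≤ g α ∧ g α ≤ d (idx α) + 1 / ((idx α : ℝ) - 1) := by
    intro α h0 h1
    have h1' : α < 1 := lt_trans h1 (by norm_num)
    have hn2 : 2 ≤ idx α := two_le_idx h0 h1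
    set n := idx α with hn
    set cn : ℝ := ((R ∩ Set.Iio n).ncard : ℝ) with hcn
    set L : ℝ := Real.log (1/α) with hL
    have hnR : (2:ℝ) ≤ (n:ℝ) := by exact_mod_cast hn2
    have hlog2 : (0:ℝ) < Real.log 2 := Real.log_pos (by norm_num)
    have hcn0 : 0 ≤ cn := by positivity
    have hcnn : cn ≤ (n:ℝ) := by rw [hcn]; exact_mod_cast ncard_inter_le R n
    have hn1' : (0:ℝ) < (n:ℝ) - 1 := by linarith
    have hnp : (0:ℝ) < (n:ℝ) := by linarith
    have hlt : α < (2:ℝ)⁻¹ ^ (n - 1) := lt_pow_of_lt_idx h0 (by omega)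
    have hA1 : ((n:ℝ) - 1) * Real.log 2 < L := by
      have := Real.log_lt_log h0 hlt
      rw [Real.log_pow, Real.log_inv] at this
      have hcast : ((n - 1 : ℕ) : ℝ) = (n:ℝ) - 1 := by
        have : 1 ≤ n := by omega
        push_cast [this]
        ring
      rw [hL, one_div, Real.log_inv]
      rw [hcast] at this
      linarith
    have hB : L ≤ (n:ℝ) * Real.log 2 := by
      have := Real.log_le_log (by positivity) (pow_idx_le h0)
      rw [Real.log_pow, Real.log_inv] at this
      rw [hL, one_div, Real.log_inv]
      linarith
    have hL0 : 0 < L := lt_of_le_of_lt (by nlinarith) hA1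
    have hgval : g α = cn * Real.log 2 / L := hglog α h0 h1'
    constructor
    · rw [hgval, hd]
      simp only []
      have : cn / (n:ℝ) = cn * Real.log 2 / ((n:ℝ) * Real.log 2) := by
        rw [mul_div_mul_right _ _ (ne_of_gt hlog2)]
      rw [hcn] at this ⊢
      rw [this]
      exact div_le_div_of_nonneg_left (by positivity) hL0 hB
    · have step1 : cn * Real.log 2 / L ≤ cn / ((n:ℝ) - 1) := by
        have : cn / ((n:ℝ) - 1) = cn * Real.log 2 / (((n:ℝ) - 1) * Real.log 2) := by
          rw [mul_div_mul_right _ _ (ne_of_gt hlog2)]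
        rw [this]
        exact div_le_div_of_nonneg_left (by positivity) (mul_pos hn1' hlog2) hA1.le
      have step2 : cn / ((n:ℝ) - 1) ≤ cn / (n:ℝ) + 1 / ((n:ℝ) - 1) := by
        rw [div_add_div _ _ (ne_of_gt hnp) (ne_of_gt hn1'),
          div_le_div_iff₀ hn1' (mul_pos hnp hn1')]
        ring_nf
        nlinarith
      rw [hgval, hd]
      simp only []
      rw [hcn] at step1 step2
      linarith
  have hval : ∀ n : ℕ, 1 ≤ n → g ((2:ℝ)⁻¹ ^ n) = d n := by
    intro n hn
    have h0 : (0:ℝ) < (2:ℝ)⁻¹ ^ n := by positivity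
    have h1 : (2:ℝ)⁻¹ ^ n < 1 := by
      apply pow_lt_one₀ (by norm_num) (by norm_num) (by omega)
    have hlog2 : (0:ℝ) < Real.log 2 := Real.log_pos (by norm_num)
    rw [hglog _ h0 h1, idx_pow, hd]
    have hLval : Real.log (1 / (2:ℝ)⁻¹ ^ n) = (n:ℝ) * Real.log 2 := by
      rw [one_div, ← inv_pow, inv_inv, Real.log_pow]
    rw [hLval]
    simp only []
    rw [mul_div_mul_right _ _ (ne_of_gt hlog2)]
  have hd0 : ∀ n, 0 ≤ d n := fun n => by rw [hd]; positivity
  have hd1 : ∀ n, d n ≤ 1 := by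
    intro n
    rw [hd]
    rcases Nat.eq_zero_or_pos n with h | h
    · simp [h]
    · apply div_le_one_of_le₀
      · exact_mod_cast ncard_inter_le R n
      · positivity
  have := limits_aux g d hd0 hd1 hsand hval
  exact ⟨this.1, this.2⟩

end CantorGroup
end
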